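/- arXiv:2509.25972 — 9 statements merged into one kernel-verified Lean document; each statement's English description precedes it below -/
import Mathlib

section
/- Let Z be a commutative ring with unity, let g, ω ∈ J(Z), and let n ≥ 2 be an integer. Then the n-th compositional iterate ω^[n] equals g if and only if n·ω₂ = g₂ and, for every k ≥ 3, n·ω_k = g_k − r_k · (∑_{s=0}^{n−2} (n−1−s)·M_k^s) · c_k, where M_k is the (k−2)×(k−2) matrix over Z (rows and columns indexed by 0 ≤ i, j ≤ k−3) whose (i,j) entry is the coefficient of x^{i+2} in ω^{j+2}, r_k is the row vector of length k−2 whose j-th entry is the coefficient of x^k in ω^{j+2}, and c_k is the column vector of length k−2 whose j-th entry is ω_{j+2}. -/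
open PowerSeries Finset

/-- Composition `f ∘ g` of formal power series (substitution of `g` into `f`).
This coefficientwise formula agrees with the usual substitution whenever the
constant coefficient of `g` is zero, since then `g ^ j` has order at least `j`. -/
noncomputable def psComp {Z : Type*} [CommRing Z] (f g : Z⟦X⟧) : Z⟦X⟧ :=
  PowerSeries.mk fun n => ∑ j ∈ Finset.range (n + 1), coeff j f * coeff n (g ^ j)

/-- The `m`-th compositional iterate: `ω^[0] = X` and `ω^[m+1] = ω ∘ ω^[m]`. -/
noncomputable def psIter {Z : Type*} [CommRing Z] (ω : Z⟦X⟧) : ℕ → Z⟦X⟧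
  | 0 => PowerSeries.X
  | m + 1 => psComp ω (psIter ω m)

namespace PsAux

open Matrix

variable {Z : Type*} [CommRing Z]

lemma coeff_psComp (f g : Z⟦X⟧) (n : ℕ) :
    coeff n (psComp f g) = ∑ j ∈ range (n + 1), coeff j f * coeff n (g ^ j) := by
  simp [psComp]

lemma coeff_pow_zero {g : Z⟦X⟧} (hg : constantCoeff g = 0) {j n : ℕ} (h : n < j) :
    coeff n (g ^ j) = 0 := by
  have hdvd : (X : Z⟦X⟧) ^ j ∣ g ^ j :=
    pow_dvd_pow_of_dvd (PowerSeries.X_dvd_iff.mpr hg) j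
  exact PowerSeries.X_pow_dvd_iff.mp hdvd n h

lemma coeff_psComp_ext (f g : Z⟦X⟧) (hg : constantCoeff g = 0) {n N : ℕ} (hN : n < N) :
    coeff n (psComp f g) = ∑ j ∈ range N, coeff j f * coeff n (g ^ j) := by
  rw [coeff_psComp]
  apply Finset.sum_subset (Finset.range_subset_range.mpr hN)
  intro j hj hj'
  have hnj : n < j := by
    simp only [Finset.mem_range, not_lt] at hj'
    omega
  rw [coeff_pow_zero hg hnj, mul_zero]

lemma psComp_mul (f₁ f₂ g : Z⟦X⟧) (hg : constantCoeff g = 0) :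
    psComp (f₁ * f₂) g = psComp f₁ g * psComp f₂ g := by
  ext n
  have hrhs : coeff n (psComp f₁ g * psComp f₂ g)
      = ∑ p ∈ range (n + 1), ∑ q ∈ range (n + 1),
          coeff p f₁ * coeff q f₂ * coeff n (g ^ (p + q)) := by
    rw [PowerSeries.coeff_mul]
    have h1 : ∀ ab ∈ Finset.HasAntidiagonal.antidiagonal n,
        coeff ab.1 (psComp f₁ g) * coeff ab.2 (psComp f₂ g)
          = ∑ p ∈ range (n + 1), ∑ q ∈ range (n + 1),
              coeff p f₁ * coeff q f₂ * (coeff ab.1 (g ^ p) * coeff ab.2 (g ^ q)) := by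
      intro ab hab
      have hab' := Finset.HasAntidiagonal.mem_antidiagonal.mp hab
      rw [coeff_psComp_ext f₁ g hg (show ab.1 < n + 1 by omega),
          coeff_psComp_ext f₂ g hg (show ab.2 < n + 1 by omega),
          Finset.sum_mul_sum]
      exact Finset.sum_congr rfl fun p _ => Finset.sum_congr rfl fun q _ => by ring
    rw [Finset.sum_congr rfl h1, Finset.sum_comm]
    refine Finset.sum_congr rfl fun p _ => ?_
    rw [Finset.sum_comm]
    refine Finset.sum_congr rfl fun q _ => ?_
    rw [← Finset.mul_sum, pow_add, PowerSeries.coeff_mul]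
  rw [hrhs, coeff_psComp]
  have h2 : ∀ j ∈ range (n + 1),
      coeff j (f₁ * f₂) * coeff n (g ^ j)
        = ∑ ab ∈ Finset.HasAntidiagonal.antidiagonal j,
            coeff ab.1 f₁ * coeff ab.2 f₂ * coeff n (g ^ (ab.1 + ab.2)) := by
    intro j hj
    rw [PowerSeries.coeff_mul, Finset.sum_mul]
    refine Finset.sum_congr rfl fun ab hab => ?_
    rw [Finset.HasAntidiagonal.mem_antidiagonal.mp hab]
  rw [Finset.sum_congr rfl h2]
  have hdisj : (↑(range (n + 1)) : Set ℕ).PairwiseDisjoint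
      (fun j => (Finset.HasAntidiagonal.antidiagonal j : Finset (ℕ × ℕ))) := by
    intro a _ b _ hab
    refine Finset.disjoint_left.mpr fun x hxa hxb => hab ?_
    rw [Finset.HasAntidiagonal.mem_antidiagonal] at hxa hxb
    omega
  rw [← Finset.sum_biUnion hdisj]
  have hsub : (range (n + 1)).biUnion (fun j => Finset.HasAntidiagonal.antidiagonal j)
      ⊆ range (n + 1) ×ˢ range (n + 1) := by
    intro x hx
    simp only [Finset.mem_biUnion, Finset.mem_range, Finset.HasAntidiagonal.mem_antidiagonal] at hx
    obtain ⟨j, hj, hx⟩ := hx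
    simp only [Finset.mem_product, Finset.mem_range]
    omega
  rw [Finset.sum_subset hsub ?vanish, Finset.sum_product]
  case vanish =>
    intro x hx hx'
    have hgt : n < x.1 + x.2 := by
      by_contra h
      exact hx' (Finset.mem_biUnion.mpr ⟨x.1 + x.2, Finset.mem_range.mpr (by omega),
        Finset.HasAntidiagonal.mem_antidiagonal.mpr rfl⟩)
    rw [coeff_pow_zero hg hgt, mul_zero]

lemma psComp_one (g : Z⟦X⟧) : psComp (1 : Z⟦X⟧) g = 1 := by
  ext n
  rw [coeff_psComp]
  simp [PowerSeries.coeff_one, ite_mul, Finset.sum_ite_eq']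

lemma psComp_pow (f g : Z⟦X⟧) (hg : constantCoeff g = 0) (j : ℕ) :
    psComp (f ^ j) g = psComp f g ^ j := by
  induction j with
  | zero => simpa using psComp_one g
  | succ j ih => rw [pow_succ, pow_succ, psComp_mul _ _ _ hg, ih]

lemma psComp_assoc (f g h : Z⟦X⟧) (hg : constantCoeff g = 0)
    (hh : constantCoeff h = 0) :
    psComp (psComp f g) h = psComp f (psComp g h) := by
  ext n
  rw [coeff_psComp, coeff_psComp]
  have hpow : ∀ j, coeff n (psComp g h ^ j)
      = ∑ i ∈ range (n + 1), coeff i (g ^ j) * coeff n (h ^ i) := by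
    intro j
    rw [← psComp_pow g h hh j, coeff_psComp]
  simp_rw [hpow]
  have hext : ∀ i ∈ range (n + 1),
      coeff i (psComp f g) * coeff n (h ^ i)
        = (∑ j ∈ range (n + 1), coeff j f * coeff i (g ^ j)) * coeff n (h ^ i) := by
    intro i hi
    rw [coeff_psComp_ext f g hg (Finset.mem_range.mp hi)]
  rw [Finset.sum_congr rfl hext]
  simp_rw [Finset.sum_mul]
  rw [Finset.sum_comm]
  simp_rw [mul_assoc, ← Finset.mul_sum]

lemma constantCoeff_psComp (f g : Z⟦X⟧) (hf : constantCoeff f = 0) :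
    constantCoeff (psComp f g) = 0 := by
  rw [← PowerSeries.coeff_zero_eq_constantCoeff_apply, coeff_psComp]
  simp [PowerSeries.coeff_zero_eq_constantCoeff_apply, hf]

lemma coeff_one_psComp (f g : Z⟦X⟧) (hf : constantCoeff f = 0)
    (hg1 : coeff 1 g = 1) :
    coeff 1 (psComp f g) = coeff 1 f := by
  rw [coeff_psComp, show (1 : ℕ) + 1 = 2 from rfl, Finset.sum_range_succ,
    Finset.sum_range_one]
  simp [PowerSeries.coeff_zero_eq_constantCoeff_apply, hf, hg1]

lemma psIter_cc (ω : Z⟦X⟧) (hω0 : constantCoeff ω = 0) :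
    ∀ m, constantCoeff (psIter ω m) = 0
  | 0 => PowerSeries.constantCoeff_X
  | m + 1 => constantCoeff_psComp ω (psIter ω m) hω0

lemma psIter_c1 (ω : Z⟦X⟧) (hω0 : constantCoeff ω = 0) (hω1 : coeff 1 ω = 1) :
    ∀ m, coeff 1 (psIter ω m) = 1
  | 0 => PowerSeries.coeff_one_X
  | m + 1 => by
    have := coeff_one_psComp ω (psIter ω m) hω0 (psIter_c1 ω hω0 hω1 m)
    rw [show psIter ω (m + 1) = psComp ω (psIter ω m) from rfl, this, hω1]

lemma psComp_X (f : Z⟦X⟧) : psComp f X = f := by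
  ext n
  rw [coeff_psComp]
  simp [PowerSeries.coeff_X_pow, mul_ite, Finset.sum_ite_eq]

lemma psComp_X' (f : Z⟦X⟧) (hf : constantCoeff f = 0) : psComp X f = f := by
  ext n
  rw [coeff_psComp]
  simp only [PowerSeries.coeff_X, ite_mul, one_mul, zero_mul, Finset.sum_ite_eq',
    Finset.mem_range]
  cases n with
  | zero => simp [PowerSeries.coeff_zero_eq_constantCoeff_apply, hf]
  | succ n => simp

lemma psIter_succ_right (ω : Z⟦X⟧) (hω0 : constantCoeff ω = 0) (m : ℕ) :
    psIter ω (m + 1) = psComp (psIter ω m) ω := by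
  induction m with
  | zero =>
    show psComp ω X = psComp X ω
    rw [psComp_X, psComp_X' ω hω0]
  | succ m ih =>
    show psComp ω (psIter ω (m + 1)) = psComp (psIter ω (m + 1)) ω
    conv_lhs => rw [ih]
    rw [← psComp_assoc ω (psIter ω m) ω (psIter_cc ω hω0 m) hω0]
    rfl

lemma coeff_pow_self (ω : Z⟦X⟧) (hω0 : constantCoeff ω = 0)
    (hω1 : coeff 1 ω = 1) : ∀ j, coeff j (ω ^ j) = 1 := by
  intro j
  induction j with
  | zero => simp
  | succ j ih =>
    rw [pow_succ, PowerSeries.coeff_mul, Finset.Nat.sum_antidiagonal_eq_sum_range_succ_mk]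
    rw [Finset.sum_eq_single j]
    · rw [ih, show j + 1 - j = 1 by omega, hω1, one_mul]
    · intro k hk hkj
      rcases lt_or_gt_of_ne hkj with h | h
      · rw [coeff_pow_zero hω0 h, zero_mul]
      · have hk1 : k = j + 1 := by
          have := Finset.mem_range.mp hk
          omega
        subst hk1
        rw [show j + 1 - (j + 1) = 0 by omega,
          PowerSeries.coeff_zero_eq_constantCoeff_apply, hω0, mul_zero]
    · intro h
      exact absurd (Finset.mem_range.mpr (by omega)) h

lemma coeff_comp_key (f ω : Z⟦X⟧) (hf0 : constantCoeff f = 0)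
    (hf1 : coeff 1 f = 1) (hω0 : constantCoeff ω = 0) (hω1 : coeff 1 ω = 1)
    {m : ℕ} (hm : 2 ≤ m) :
    coeff m (psComp f ω) =
      coeff m ω + ((∑ j ∈ Ico 2 m, coeff j f * coeff m (ω ^ j)) + coeff m f) := by
  rw [coeff_psComp, Finset.sum_range_succ, coeff_pow_self ω hω0 hω1 m, mul_one]
  rw [Finset.range_eq_Ico, Finset.sum_eq_sum_Ico_succ_bot (by omega : 0 < m),
    Finset.sum_eq_sum_Ico_succ_bot (by omega : 1 < m)]
  have h0 : coeff 0 f = 0 := by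
    rw [PowerSeries.coeff_zero_eq_constantCoeff_apply, hf0]
  rw [h0, zero_mul, zero_add, hf1, one_mul, pow_one, show (1 : ℕ) + 1 = 2 from rfl]
  ring

lemma tri_sum {A : Type*} [Ring A] (x : A) (N : ℕ) :
    ∑ m ∈ range (N + 1), ∑ s ∈ range m, x ^ s = ∑ s ∈ range N, (N - s) • x ^ s := by
  induction N with
  | zero => simp
  | succ N ih =>
    rw [Finset.sum_range_succ, ih]
    have hterm : ∀ s ∈ range (N + 1), (N + 1 - s) • x ^ s = (N - s) • x ^ s + x ^ s := by
      intro s hs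
      have hs' := Finset.mem_range.mp hs
      rw [show N + 1 - s = (N - s) + 1 by omega, succ_nsmul]
    rw [Finset.sum_congr rfl hterm, Finset.sum_add_distrib]
    congr 1
    rw [Finset.sum_range_succ]
    simp

open Matrix in
lemma coeff_iter_formula (ω : Z⟦X⟧) (hω0 : constantCoeff ω = 0)
    (hω1 : coeff 1 ω = 1) (k : ℕ) (hk : 3 ≤ k) (n : ℕ) :
    coeff k (psIter ω n) =
      n • coeff k ω +
        (fun j : Fin (k - 2) => coeff k (ω ^ ((j : ℕ) + 2))) ⬝ᵥ
          ((∑ m ∈ range n, ∑ s ∈ range m,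
              (Matrix.of fun i j : Fin (k - 2) =>
                coeff ((i : ℕ) + 2) (ω ^ ((j : ℕ) + 2))) ^ s) *ᵥ
            (fun j : Fin (k - 2) => coeff ((j : ℕ) + 2) ω)) := by
  set M : Matrix (Fin (k - 2)) (Fin (k - 2)) Z :=
    Matrix.of fun i j : Fin (k - 2) => coeff ((i : ℕ) + 2) (ω ^ ((j : ℕ) + 2)) with hM
  set c : Fin (k - 2) → Z := fun j => coeff ((j : ℕ) + 2) ω with hc
  set r : Fin (k - 2) → Z := fun j => coeff k (ω ^ ((j : ℕ) + 2)) with hr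
  have hcc := psIter_cc ω hω0
  have hc1 := psIter_c1 ω hω0 hω1
  -- row recursion for the lower coefficients
  have hrow : ∀ (f : Z⟦X⟧), constantCoeff f = 0 → coeff 1 f = 1 → ∀ i : Fin (k - 2),
      coeff ((i : ℕ) + 2) (psComp f ω)
        = c i + ∑ j : Fin (k - 2), M i j * coeff ((j : ℕ) + 2) f := by
    intro f hf0 hf1 i
    have hi := i.isLt
    rw [coeff_comp_key f ω hf0 hf1 hω0 hω1 (by omega : 2 ≤ (i : ℕ) + 2)]
    congr 1
    simp only [hM, Matrix.of_apply]
    rw [Fin.sum_univ_eq_sum_range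
      (fun j => coeff ((i : ℕ) + 2) (ω ^ (j + 2)) * coeff (j + 2) f) (k - 2)]
    rw [← Finset.sum_subset (Finset.range_subset_range.mpr (show (i : ℕ) + 1 ≤ k - 2 by omega))
      (fun j _ hj => by
        have hij : (i : ℕ) + 2 < j + 2 := by
          simp only [Finset.mem_range, not_lt] at hj
          omega
        rw [coeff_pow_zero hω0 hij, zero_mul])]
    rw [Finset.sum_range_succ, coeff_pow_self ω hω0 hω1 ((i : ℕ) + 2), one_mul]
    congr 1
    rw [Finset.sum_Ico_eq_sum_range]
    simp only [show (i : ℕ) + 2 - 2 = (i : ℕ) from rfl]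
    exact Finset.sum_congr rfl fun l _ => by rw [Nat.add_comm 2 l, mul_comm]
  -- top-row recursion for the k-th coefficient
  have htop : ∀ (f : Z⟦X⟧), constantCoeff f = 0 → coeff 1 f = 1 →
      coeff k (psComp f ω)
        = coeff k ω +
            ((∑ j : Fin (k - 2), r j * coeff ((j : ℕ) + 2) f) + coeff k f) := by
    intro f hf0 hf1
    rw [coeff_comp_key f ω hf0 hf1 hω0 hω1 (by omega : 2 ≤ k)]
    congr 2
    simp only [hr]
    rw [Fin.sum_univ_eq_sum_range
      (fun j => coeff k (ω ^ (j + 2)) * coeff (j + 2) f) (k - 2)]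
    rw [Finset.sum_Ico_eq_sum_range]
    exact Finset.sum_congr rfl fun l _ => by rw [Nat.add_comm 2 l, mul_comm]
  -- closed form for the vector of lower coefficients
  have hv : ∀ m, (fun j : Fin (k - 2) => coeff ((j : ℕ) + 2) (psIter ω m))
      = (∑ s ∈ range m, M ^ s) *ᵥ c := by
    intro m
    induction m with
    | zero =>
      funext j
      have hj1 : ¬ ((j : ℕ) + 2 = 1) := by omega
      simp [psIter, PowerSeries.coeff_X, hj1, Matrix.zero_mulVec]
    | succ m ih =>
      rw [geom_sum_succ, Matrix.add_mulVec, Matrix.one_mulVec, ← Matrix.mulVec_mulVec,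
        ← ih]
      funext i
      rw [show psIter ω (m + 1) = psComp (psIter ω m) ω from psIter_succ_right ω hω0 m,
        hrow _ (hcc m) (hc1 m) i]
      simp only [Pi.add_apply, Matrix.mulVec, dotProduct]
      rw [add_comm]
  -- main induction on the iterate
  induction n with
  | zero =>
    have hk1 : ¬ (k = 1) := by omega
    simp [psIter, PowerSeries.coeff_X, hk1, Matrix.zero_mulVec]
  | succ n ih =>
    rw [show psIter ω (n + 1) = psComp (psIter ω n) ω from psIter_succ_right ω hω0 n,
      htop _ (hcc n) (hc1 n), ih]
    have hrv : (∑ j : Fin (k - 2), r j * coeff ((j : ℕ) + 2) (psIter ω n))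
        = r ⬝ᵥ ((∑ s ∈ range n, M ^ s) *ᵥ c) := by
      rw [← hv n]
      rfl
    rw [hrv, Finset.sum_range_succ (fun m => ∑ s ∈ range m, M ^ s) n,
      Matrix.add_mulVec, dotProduct_add, succ_nsmul]
    ring

end PsAux

open Matrix in
/-- for `g, ω ∈ 𝒥(Z)` and `n ≥ 2`, `ω^[n] = g` iff `n·ω₂ = g₂` and, for all
`k ≥ 3`, `n·ω_k = g_k − r_k (∑_{s=0}^{n−2} (n−1−s)·M_k^s) c_k`, where
`(M_k)_{i,j} = [x^{i+2}](ω^{j+2})`, `(r_k)_j = [x^k](ω^{j+2})` and `(c_k)_j = ω_{j+2}`. -/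
theorem roots_order_n_characterization {Z : Type*} [CommRing Z] (g ω : Z⟦X⟧)
    (hg0 : constantCoeff g = 0) (hg1 : coeff 1 g = 1)
    (hω0 : constantCoeff ω = 0) (hω1 : coeff 1 ω = 1)
    (n : ℕ) (hn : 2 ≤ n) :
    psIter ω n = g ↔
      ((n : Z) * coeff 2 ω = coeff 2 g ∧
        ∀ k : ℕ, 3 ≤ k →
          (n : Z) * coeff k ω =
            coeff k g -
              (fun j : Fin (k - 2) => coeff k (ω ^ ((j : ℕ) + 2))) ⬝ᵥ
                ((∑ s ∈ Finset.range (n - 1),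
                    (n - 1 - s) •
                      (Matrix.of fun i j : Fin (k - 2) =>
                        coeff ((i : ℕ) + 2) (ω ^ ((j : ℕ) + 2))) ^ s) *ᵥ
                  (fun j : Fin (k - 2) => coeff ((j : ℕ) + 2) ω))) := by
  have hcc := PsAux.psIter_cc ω hω0
  have hc1 := PsAux.psIter_c1 ω hω0 hω1
  -- coefficient 2 of the iterates
  have h2 : ∀ m, coeff 2 (psIter ω m) = m • coeff 2 ω := by
    intro m
    induction m with
    | zero => simp [psIter, PowerSeries.coeff_X]
    | succ m ih =>
      rw [show psIter ω (m + 1) = psComp (psIter ω m) ω from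
          PsAux.psIter_succ_right ω hω0 m,
        PsAux.coeff_comp_key _ ω (hcc m) (hc1 m) hω0 hω1 le_rfl, ih]
      rw [Finset.Ico_self, Finset.sum_empty, zero_add, succ_nsmul]
      ring
  -- coefficient k (k ≥ 3) of the n-th iterate, in the form of the statement
  have hkk : ∀ k : ℕ, 3 ≤ k →
      coeff k (psIter ω n) =
        n • coeff k ω +
          (fun j : Fin (k - 2) => coeff k (ω ^ ((j : ℕ) + 2))) ⬝ᵥ
            ((∑ s ∈ Finset.range (n - 1),
                (n - 1 - s) •
                  (Matrix.of fun i j : Fin (k - 2) =>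
                    coeff ((i : ℕ) + 2) (ω ^ ((j : ℕ) + 2))) ^ s) *ᵥ
              (fun j : Fin (k - 2) => coeff ((j : ℕ) + 2) ω)) := by
    intro k hk
    rw [PsAux.coeff_iter_formula ω hω0 hω1 k hk n]
    have e : (∑ m ∈ Finset.range n, ∑ s ∈ Finset.range m,
          (Matrix.of fun i j : Fin (k - 2) =>
            coeff ((i : ℕ) + 2) (ω ^ ((j : ℕ) + 2))) ^ s)
        = ∑ s ∈ Finset.range (n - 1),
            (n - 1 - s) •
              (Matrix.of fun i j : Fin (k - 2) =>
                coeff ((i : ℕ) + 2) (ω ^ ((j : ℕ) + 2))) ^ s := by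
      have := PsAux.tri_sum
        (Matrix.of fun i j : Fin (k - 2) =>
          coeff ((i : ℕ) + 2) (ω ^ ((j : ℕ) + 2))) (n - 1)
      rwa [show n - 1 + 1 = n by omega] at this
    rw [e]
  constructor
  · rintro rfl
    refine ⟨?_, fun k hk => ?_⟩
    · rw [h2 n, nsmul_eq_mul]
    · rw [hkk k hk, nsmul_eq_mul]
      ring
  · rintro ⟨hA, hB⟩
    ext m
    rcases m with _ | _ | _ | m
    · rw [PowerSeries.coeff_zero_eq_constantCoeff_apply,
        PowerSeries.coeff_zero_eq_constantCoeff_apply, hcc n, hg0]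
    · rw [hc1 n, hg1]
    · rw [h2 n, nsmul_eq_mul, hA]
    · have h3 : 3 ≤ m + 3 := by omega
      rw [hkk (m + 3) h3, nsmul_eq_mul]
      have := hB (m + 3) h3
      rw [this]
      ring
end

section
/- Let Z be a commutative ring with unity, let g, ω ∈ J(Z), and let n ≥ 1. If ω is a root of order n of g (that is, ω^[n] = g), then the multiplicity of ω is less than or equal to the multiplicity of g; equivalently, the order of the power series ω − x is less than or equal to the order of the power series g − x (with the convention that the zero power series has order ∞). -/
open PowerSeries Finset

lemma psIter_constantCoeff {Z : Type*} [CommRing Z] (ω : Z⟦X⟧)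
    (hω0 : constantCoeff ω = 0) (m : ℕ) : constantCoeff (psIter ω m) = 0 := by
  induction m with
  | zero => simp [psIter]
  | succ m ih =>
    have : constantCoeff (psIter ω (m+1)) = coeff 0 (psIter ω (m+1)) := by
      simp [PowerSeries.coeff_zero_eq_constantCoeff]
    rw [this]
    simp [psIter, psComp, PowerSeries.coeff_zero_eq_constantCoeff, hω0]

lemma psIter_coeff_eq {Z : Type*} [CommRing Z] (ω : Z⟦X⟧)
    (hω0 : constantCoeff ω = 0) (hω1 : coeff 1 ω = 1) (m : ℕ) (d : ℕ)
    (hd : (d : ℕ∞) < (ω - PowerSeries.X).order) :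
    coeff d (psIter ω m) = coeff d (PowerSeries.X : Z⟦X⟧) := by
  induction m generalizing d with
  | zero => rfl
  | succ m ih =>
    have hcoeffω : ∀ j : ℕ, (j : ℕ∞) < (ω - PowerSeries.X).order →
        coeff j ω = coeff j (PowerSeries.X : Z⟦X⟧) := by
      intro j hj
      have := PowerSeries.coeff_of_lt_order j hj
      rw [map_sub] at this
      exact sub_eq_zero.mp this
    set h := psIter ω m with hh
    have hX : (PowerSeries.X : Z⟦X⟧) ∣ h :=
      PowerSeries.X_dvd_iff.mpr (psIter_constantCoeff ω hω0 m)
    have hpow : ∀ j : ℕ, d < j → coeff d (h ^ j) = 0 := by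
      intro j hj
      have : (PowerSeries.X : Z⟦X⟧) ^ j ∣ h ^ j := pow_dvd_pow_of_dvd hX j
      exact PowerSeries.X_pow_dvd_iff.mp this d hj
    show coeff d (psComp ω h) = _
    rw [psComp, PowerSeries.coeff_mk]
    have hterm : ∀ j ∈ Finset.range (d + 1),
        coeff j ω * coeff d (h ^ j) =
          (if j = 1 then coeff d h else 0) := by
      intro j hj
      rcases Nat.lt_or_ge j 2 with hj2 | hj2
      · interval_cases j
        · simp [← PowerSeries.coeff_zero_eq_constantCoeff] at hω0
          simp [hω0]
        · simp [hω1]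
      · have hjd : j ≤ d := Nat.lt_succ_iff.mp (Finset.mem_range.mp hj)
        have : coeff j ω = coeff j (PowerSeries.X : Z⟦X⟧) := by
          apply hcoeffω
          exact lt_of_le_of_lt (by exact_mod_cast Nat.cast_le.mpr hjd) hd
        rw [this, PowerSeries.coeff_X]
        have : ¬ (j = 1) := by omega
        simp [this]
    rw [Finset.sum_congr rfl hterm]
    rw [Finset.sum_ite_eq' (Finset.range (d+1)) 1 (fun _ => coeff d h)]
    by_cases hd1 : 1 ∈ Finset.range (d + 1)
    · rw [if_pos hd1, ih d hd]
    · have : d = 0 := by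
        simp only [Finset.mem_range] at hd1; omega
      subst this
      rw [if_neg hd1]
      simp

/-- if `ω^[n] = g` in `𝒥(Z)` (`n ≥ 1`), then the multiplicity of `ω` is at most
the multiplicity of `g`, i.e. `order (ω − X) ≤ order (g − X)`. -/
theorem multiplicity_root_le {Z : Type*} [CommRing Z] (g ω : Z⟦X⟧)
    (hg0 : constantCoeff g = 0) (hg1 : coeff 1 g = 1)
    (hω0 : constantCoeff ω = 0) (hω1 : coeff 1 ω = 1)
    (n : ℕ) (hn : 1 ≤ n) (hroot : psIter ω n = g) :
    (ω - PowerSeries.X).order ≤ (g - PowerSeries.X).order := by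
  apply PowerSeries.le_order
  intro i hi
  rw [map_sub, ← hroot, psIter_coeff_eq ω hω0 hω1 n i hi, sub_self]
end

section
/- Let K be a field of characteristic 0. Then J(K) is an algebraically complete URE-group: for every g ∈ J(K) and every integer n ≥ 1, there exists a unique ω ∈ J(K) such that ω^[n] = g. -/
open PowerSeries Finset

section Aux

variable {K : Type*} [Field K]

lemma coeff_pow_lt {g : K⟦X⟧} (hg : constantCoeff g = 0) {m j : ℕ} (h : m < j) :
    coeff m (g ^ j) = 0 := by
  have hd : (X : K⟦X⟧) ^ j ∣ g ^ j := pow_dvd_pow_of_dvd (X_dvd_iff.mpr hg) j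
  exact X_pow_dvd_iff.mp hd m h

lemma coeff_pow_self {g : K⟦X⟧} (h0 : constantCoeff g = 0) (h1 : coeff 1 g = 1) :
    ∀ j, coeff j (g ^ j) = 1
  | 0 => by simp
  | (j+1) => by
    rw [pow_succ', coeff_mul]
    rw [Finset.sum_eq_single ((1 : ℕ), j)]
    · rw [h1, coeff_pow_self h0 h1 j, one_mul]
    · rintro ⟨a, b⟩ hab hne
      have hm : a + b = j + 1 := Finset.HasAntidiagonal.mem_antidiagonal.mp hab
      rcases Nat.lt_or_ge a 1 with ha | ha
      · interval_cases a
        simp [coeff_zero_eq_constantCoeff, h0]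
      · rcases Nat.lt_or_ge a 2 with ha2 | ha2
        · interval_cases a
          exact absurd (by omega : b = j) (by simpa using fun h => hne (by simp [h]))
        · have : b < j := by omega
          rw [coeff_pow_lt h0 this, mul_zero]
    · intro h
      exact absurd (Finset.HasAntidiagonal.mem_antidiagonal.mpr (by omega)) h

lemma coeff_pow_congr {g g' : K⟦X⟧} {k : ℕ} (h : ∀ i ≤ k, coeff i g = coeff i g') :
    ∀ j, ∀ i ≤ k, coeff i (g ^ j) = coeff i (g' ^ j)
  | 0 => fun i _ => rfl
  | (j+1) => fun i hi => by
    rw [pow_succ', pow_succ', coeff_mul, coeff_mul]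
    refine Finset.sum_congr rfl fun p hp => ?_
    have hm := Finset.HasAntidiagonal.mem_antidiagonal.mp hp
    rw [h p.1 (by omega), coeff_pow_congr h j p.2 (by omega)]

lemma coeff_pow_congr_top {g g' : K⟦X⟧} {k : ℕ} (hg : constantCoeff g = 0)
    (hg' : constantCoeff g' = 0) (h : ∀ i < k, coeff i g = coeff i g')
    {j : ℕ} (hj : 2 ≤ j) : coeff k (g ^ j) = coeff k (g' ^ j) := by
  obtain ⟨j, rfl⟩ : ∃ m, j = m + 1 := ⟨j - 1, by omega⟩
  have hj1 : 1 ≤ j := by omega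
  rw [pow_succ', pow_succ', coeff_mul, coeff_mul]
  refine Finset.sum_congr rfl fun p hp => ?_
  have hm := Finset.HasAntidiagonal.mem_antidiagonal.mp hp
  rcases Nat.eq_zero_or_pos p.1 with h1 | h1
  · rw [h1]
    simp [coeff_zero_eq_constantCoeff, hg, hg']
  rcases Nat.eq_zero_or_pos p.2 with h2 | h2
  · rw [h2, coeff_pow_lt hg hj1, coeff_pow_lt hg' hj1, mul_zero, mul_zero]
  · rw [h p.1 (by omega),
      coeff_pow_congr (fun t ht => h t (by omega)) j p.2 le_rfl]

lemma coeff_psComp (f g : K⟦X⟧) (m : ℕ) :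
    coeff m (psComp f g) = ∑ j ∈ Finset.range (m + 1), coeff j f * coeff m (g ^ j) := by
  simp [psComp]

lemma constantCoeff_psComp (f g : K⟦X⟧) :
    constantCoeff (psComp f g) = constantCoeff f := by
  rw [← coeff_zero_eq_constantCoeff, coeff_psComp]
  simp

lemma coeff_one_psComp (f g : K⟦X⟧) :
    coeff 1 (psComp f g) = coeff 1 f * coeff 1 g := by
  rw [coeff_psComp]
  rw [Finset.sum_range_succ, Finset.sum_range_one]
  simp

lemma coeff_comp_congr {f f' g g' : K⟦X⟧} {k : ℕ}
    (hf : ∀ i < k, coeff i f = coeff i f') (hg : ∀ i < k, coeff i g = coeff i g')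
    {i : ℕ} (hi : i < k) : coeff i (psComp f g) = coeff i (psComp f' g') := by
  rw [coeff_psComp, coeff_psComp]
  refine Finset.sum_congr rfl fun j hj => ?_
  have hj' := Finset.mem_range.mp hj
  rw [hf j (by omega), coeff_pow_congr (fun t ht => hg t (by omega)) j i le_rfl]

lemma coeff_comp_top {f g : K⟦X⟧} (hg0 : constantCoeff g = 0) (hg1 : coeff 1 g = 1)
    (hf1 : coeff 1 f = 1) {k : ℕ} (hk : 2 ≤ k) :
    coeff k (psComp f g) = coeff k g + coeff k f
      + ∑ j ∈ Finset.Ico 2 k, coeff j f * coeff k (g ^ j) := by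
  rw [coeff_psComp, Finset.sum_range_succ, coeff_pow_self hg0 hg1, mul_one]
  rw [Finset.range_eq_Ico, ← Finset.sum_Ico_consecutive _ (by omega : (0:ℕ) ≤ 2) hk]
  have h02 : ∑ j ∈ Finset.Ico 0 2, coeff j f * coeff k (g ^ j) = coeff k g := by
    rw [show Finset.Ico 0 2 = {0, 1} from rfl]
    rw [Finset.sum_insert (by decide), Finset.sum_singleton]
    have hk0 : coeff k ((g : K⟦X⟧) ^ 0) = 0 := by
      rw [pow_zero, coeff_one, if_neg (by omega)]
    rw [hk0, mul_zero, zero_add, pow_one, hf1, one_mul]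
  rw [h02]
  ring

lemma iter_const0 {ω : K⟦X⟧} (h0 : constantCoeff ω = 0) (m : ℕ) :
    constantCoeff (psIter ω m) = 0 := by
  induction m with
  | zero => simp [psIter]
  | succ m ih => rw [psIter, constantCoeff_psComp]; exact h0

lemma iter_const1 {ω : K⟦X⟧} (h1 : coeff 1 ω = 1) (m : ℕ) :
    coeff 1 (psIter ω m) = 1 := by
  induction m with
  | zero => simp [psIter]
  | succ m ih => rw [psIter, coeff_one_psComp, h1, ih, one_mul]

lemma iter_coeff_key {ω ω' : K⟦X⟧} (h0 : constantCoeff ω = 0) (h1 : coeff 1 ω = 1)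
    (h0' : constantCoeff ω' = 0) (h1' : coeff 1 ω' = 1) {k : ℕ} (hk : 2 ≤ k)
    (hlt : ∀ i < k, coeff i ω = coeff i ω') (m : ℕ) :
    (∀ i < k, coeff i (psIter ω m) = coeff i (psIter ω' m)) ∧
    coeff k (psIter ω m) - coeff k (psIter ω' m) = (m : K) * (coeff k ω - coeff k ω') := by
  induction m with
  | zero => simp [psIter]
  | succ m ih =>
    obtain ⟨ih1, ih2⟩ := ih
    have hg0 : constantCoeff (psIter ω m) = 0 := iter_const0 h0 m
    have hg1 : coeff 1 (psIter ω m) = 1 := iter_const1 h1 m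
    have hg0' : constantCoeff (psIter ω' m) = 0 := iter_const0 h0' m
    have hg1' : coeff 1 (psIter ω' m) = 1 := iter_const1 h1' m
    constructor
    · intro i hi
      rw [psIter, psIter]
      exact coeff_comp_congr hlt ih1 hi
    · rw [psIter, psIter, coeff_comp_top hg0 hg1 h1 hk, coeff_comp_top hg0' hg1' h1' hk]
      have hsum : ∑ j ∈ Finset.Ico 2 k, coeff j ω * coeff k ((psIter ω m) ^ j)
          = ∑ j ∈ Finset.Ico 2 k, coeff j ω' * coeff k ((psIter ω' m) ^ j) := by
        refine Finset.sum_congr rfl fun j hj => ?_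
        obtain ⟨hj2, hjk⟩ := Finset.mem_Ico.mp hj
        rw [hlt j hjk, coeff_pow_congr_top hg0 hg0' ih1 hj2]
      rw [hsum]
      push_cast
      have : coeff k (psIter ω m) + coeff k ω +
          ∑ j ∈ Finset.Ico 2 k, coeff j ω' * coeff k (psIter ω' m ^ j) -
          (coeff k (psIter ω' m) + coeff k ω' +
          ∑ j ∈ Finset.Ico 2 k, coeff j ω' * coeff k (psIter ω' m ^ j))
          = (coeff k (psIter ω m) - coeff k (psIter ω' m))
            + (coeff k ω - coeff k ω') := by ring
      rw [this, ih2]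
      ring

/-- Auxiliary coefficient: the next coefficient of the iterative root. -/
noncomputable def stepC (g : K⟦X⟧) (n : ℕ) (k : ℕ) (t : K⟦X⟧) : K :=
  if k = 0 then 0 else if k = 1 then 1
  else (coeff k g - coeff k (psIter t n)) / n

/-- `approx g n k` is the truncation (degree `< k`) of the iterative root of `g`. -/
noncomputable def approx (g : K⟦X⟧) (n : ℕ) : ℕ → K⟦X⟧
  | 0 => 0
  | (k+1) => approx g n k + PowerSeries.C (stepC g n k (approx g n k)) * X ^ k

/-- The iterative root of order `n` of `g`. -/
noncomputable def theRoot (g : K⟦X⟧) (n : ℕ) : K⟦X⟧ :=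
  PowerSeries.mk fun k => stepC g n k (approx g n k)

lemma coeff_approx (g : K⟦X⟧) (n : ℕ) :
    ∀ k i, coeff i (approx g n k) = if i < k then coeff i (theRoot g n) else 0
  | 0, i => by simp [approx]
  | (k+1), i => by
    rw [approx, map_add, coeff_approx g n k i]
    rw [coeff_C_mul, coeff_X_pow]
    rcases Nat.lt_trichotomy i k with h | h | h
    · rw [if_pos h, if_neg (show ¬ i = k by omega), if_pos (show i < k + 1 by omega),
        mul_zero, add_zero]
    · subst h
      rw [if_neg (lt_irrefl i), if_pos rfl, if_pos (show i < i + 1 by omega),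
        mul_one, zero_add]
      simp [theRoot, coeff_mk]
    · rw [if_neg (show ¬ i < k by omega), if_neg (show ¬ i = k by omega),
        if_neg (show ¬ i < k + 1 by omega), mul_zero, add_zero]

end Aux

/-- for a field `K` of characteristic 0, `𝒥(K)` is an algebraically complete
URE-group: every `g ∈ 𝒥(K)` has a unique iterative root of each order `n ≥ 1`. -/
theorem substitution_group_char_zero_complete_URE {K : Type*} [Field K] [CharZero K]
    (g : K⟦X⟧) (hg0 : constantCoeff g = 0) (hg1 : coeff 1 g = 1)
    (n : ℕ) (hn : 1 ≤ n) :
    ∃! ω : K⟦X⟧, (constantCoeff ω = 0 ∧ coeff 1 ω = 1) ∧ psIter ω n = g := by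
  have hnK : (n : K) ≠ 0 := Nat.cast_ne_zero.mpr (by omega)
  set ω := theRoot g n with hω
  have hω0 : constantCoeff ω = 0 := by
    rw [← coeff_zero_eq_constantCoeff]
    simp [hω, theRoot, coeff_mk, stepC]
  have hω1 : coeff 1 ω = 1 := by
    simp [hω, theRoot, coeff_mk, stepC]
  have happrox : ∀ k i, i < k → coeff i (approx g n k) = coeff i ω := by
    intro k i h
    rw [coeff_approx, if_pos h]
  have hiter : psIter ω n = g := by
    ext k
    match k with
    | 0 =>
      rw [coeff_zero_eq_constantCoeff, iter_const0 hω0 n, hg0]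
    | 1 =>
      rw [iter_const1 hω1 n, hg1]
    | (k+2) =>
      set k' := k + 2 with hk'
      have hk2 : 2 ≤ k' := by omega
      set t := approx g n k' with ht
      have ht0 : constantCoeff t = 0 := by
        rw [← coeff_zero_eq_constantCoeff, happrox k' 0 (by omega),
          coeff_zero_eq_constantCoeff, hω0]
      have ht1 : coeff 1 t = 1 := by rw [happrox k' 1 (by omega), hω1]
      have htk : coeff k' t = 0 := by rw [coeff_approx, if_neg (by omega)]
      have key := (iter_coeff_key hω0 hω1 ht0 ht1 hk2
        (fun i hi => (happrox k' i hi).symm) n).2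
      rw [htk, sub_zero] at key
      have hcoeff : coeff k' ω = (coeff k' g - coeff k' (psIter t n)) / n := by
        simp [hω, theRoot, coeff_mk, stepC, hk', ht]
      rw [hcoeff, mul_div_cancel₀ _ hnK] at key
      linear_combination key
  refine ⟨ω, ⟨⟨hω0, hω1⟩, hiter⟩, ?_⟩
  rintro ω' ⟨⟨h0', h1'⟩, hiter'⟩
  ext k
  induction k using Nat.strong_induction_on with
  | _ k ih =>
    match k with
    | 0 =>
      simp only [coeff_zero_eq_constantCoeff]
      rw [h0', hω0]
    | 1 => rw [h1', hω1]
    | (k+2) =>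
      have key := (iter_coeff_key h0' h1' hω0 hω1 (show 2 ≤ k + 2 by omega)
        (fun i hi => ih i (by omega)) n).2
      rw [hiter', hiter, sub_self] at key
      have hd : coeff (k+2) ω' - coeff (k+2) ω = 0 := by
        rcases mul_eq_zero.mp key.symm with h | h
        · exact absurd h hnK
        · exact h
      linear_combination hd
end

section
/- Let Z be a nontrivial commutative ring with unity of characteristic p > 0, and let ω = x + x² + x³ + ⋯ = x/(1−x) ∈ J(Z) (the power series whose coefficient of x^k is 1 for every k ≥ 1). Then for every m ≥ 0, the m-th compositional iterate ω^[m] equals x if and only if p divides m. In particular ω is an element of J(Z) of finite order exactly p, distinct from the identity x. -/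
open PowerSeries Finset

noncomputable def gs {Z : Type*} [CommRing Z] (c : Z) : Z⟦X⟧ :=
  PowerSeries.mk fun k => if k = 0 then 0 else c ^ (k - 1)

section Aux
variable {Z : Type*} [CommRing Z]

lemma gs_constantCoeff (c : Z) : constantCoeff (gs c) = 0 := by
  simp [gs, ← coeff_zero_eq_constantCoeff]

lemma gs_zero : gs (0 : Z) = PowerSeries.X := by
  ext k
  rcases k with _ | _ | k <;> simp [gs, coeff_X, pow_succ]

lemma coeff_pow_zero_of_lt {f : Z⟦X⟧} (hf : constantCoeff f = 0) {n j : ℕ} (h : n < j) :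
    coeff n (f ^ j) = 0 := by
  have : (PowerSeries.X : Z⟦X⟧) ^ j ∣ f ^ j :=
    pow_dvd_pow_of_dvd (PowerSeries.X_dvd_iff.mpr hf) j
  exact (PowerSeries.X_pow_dvd_iff.mp this) n h

lemma psComp_omega_mul (f : Z⟦X⟧) (hf : constantCoeff f = 0) :
    psComp (PowerSeries.mk fun k => if k = 0 then (0 : Z) else 1) f * (1 - f) = f := by
  ext n
  set T : Z⟦X⟧ := ∑ j ∈ range (n + 1), f ^ j with hT
  have key : ∀ i ≤ n, coeff i (psComp (PowerSeries.mk fun k => if k = 0 then (0 : Z) else 1) f)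
      = coeff i (T - 1) := by
    intro i hi
    have h1 : coeff i (psComp (PowerSeries.mk fun k => if k = 0 then (0 : Z) else 1) f)
        = ∑ j ∈ range (n + 1),
            (if j = 0 then (0 : Z) else 1) * coeff i (f ^ j) := by
      rw [psComp, coeff_mk]
      simp only [coeff_mk]
      apply Finset.sum_subset
      · exact Finset.range_subset_range.mpr (by omega)
      · intro j hj hj'
        simp only [Finset.mem_range, not_lt] at hj'
        rw [coeff_pow_zero_of_lt hf (by omega), mul_zero]
    rw [h1, map_sub, hT, map_sum]
    rw [Finset.sum_range_succ', Finset.sum_range_succ']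
    simp [pow_succ]
  rw [coeff_mul]
  rw [Finset.sum_congr rfl (fun x hx => by
    rw [key x.1 (by
      have := Finset.HasAntidiagonal.antidiagonal.fst_le hx
      omega)])]
  rw [← coeff_mul]
  have hgeom : T * (f - 1) = f ^ (n + 1) - 1 := geom_sum_mul f (n + 1)
  have : (T - 1) * (1 - f) = f - f ^ (n + 1) := by
    have : (T - 1) * (1 - f) = -(T * (f - 1)) + (f - 1) := by ring
    rw [this, hgeom]; ring
  rw [this, map_sub, coeff_pow_zero_of_lt hf (Nat.lt_succ_self n), sub_zero]

lemma gs_succ_mul (c : Z) : gs (c + 1) * (1 - gs c) = gs c := by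
  have : gs (c + 1) * (1 - gs c) = gs (c + 1) - gs (c + 1) * gs c := by ring
  rw [this]
  ext n
  rw [map_sub, coeff_mul, Finset.Nat.sum_antidiagonal_eq_sum_range_succ_mk]
  rcases n with _ | k
  · simp [gs]
  · have hsum : ∑ i ∈ range (k + 1 + 1),
        coeff i (gs (c + 1)) * coeff (k + 1 - i) (gs c)
        = ∑ i ∈ range k, (c + 1) ^ i * c ^ (k - 1 - i) := by
      rw [Finset.sum_range_succ]
      simp only [gs, coeff_mk]
      rw [Finset.sum_range_succ']
      simp only [if_true, ite_true, Nat.sub_self, zero_mul, mul_zero, add_zero]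
      apply Finset.sum_congr rfl
      intro i hi
      simp only [Finset.mem_range] at hi
      have h1 : i + 1 ≠ 0 := by omega
      have h2 : k + 1 - (i + 1) ≠ 0 := by omega
      rw [if_neg h1, if_neg h2]
      have e2 : k + 1 - (i + 1) - 1 = k - 1 - i := by omega
      rw [show i + 1 - 1 = i from rfl, e2]
    rw [hsum]
    have hgeom := geom_sum₂_mul (c + 1) c k
    rw [add_sub_cancel_left, mul_one] at hgeom
    rw [hgeom]
    simp only [gs, coeff_mk]
    simp

lemma psComp_omega_gs (c : Z) :
    psComp (PowerSeries.mk fun k => if k = 0 then (0 : Z) else 1) (gs c) = gs (c + 1) := by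
  have hu : IsUnit (1 - gs c) := by
    rw [PowerSeries.isUnit_iff_constantCoeff]
    simp [gs_constantCoeff]
  have h1 := psComp_omega_mul (gs c) (gs_constantCoeff c)
  have h2 := gs_succ_mul c
  have := h1.trans h2.symm
  rw [mul_comm _ (1 - gs c), mul_comm _ (1 - gs c)] at this
  exact hu.mul_left_cancel this

end Aux


/-- over a nontrivial commutative ring of characteristic `p > 0`, the series
`ω = x + x² + x³ + ⋯ = x/(1−x)` satisfies `ω^[m] = x` iff `p ∣ m`; in particular `ω` is an
element of `𝒥(Z)` of finite order exactly `p`, distinct from the identity `x`. -/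
theorem geometric_series_order_p {Z : Type*} [CommRing Z] [Nontrivial Z]
    (p : ℕ) [CharP Z p] (hp : 0 < p) :
    (∀ m : ℕ, psIter (PowerSeries.mk fun k => if k = 0 then (0 : Z) else 1) m
        = PowerSeries.X ↔ p ∣ m) ∧
      (PowerSeries.mk fun k => if k = 0 then (0 : Z) else 1) ≠ PowerSeries.X := by
  have hiter : ∀ m : ℕ,
      psIter (PowerSeries.mk fun k => if k = 0 then (0 : Z) else 1) m = gs (m : Z) := by
    intro m
    induction m with
    | zero => rw [Nat.cast_zero, gs_zero]; rfl
    | succ m ih =>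
        show psComp _ _ = _
        rw [ih, psComp_omega_gs]
        push_cast
        ring_nf
  constructor
  · intro m
    rw [hiter m]
    constructor
    · intro h
      have h2 := congrArg (coeff 2) h
      simp [gs, coeff_X] at h2
      exact (CharP.cast_eq_zero_iff Z p m).mp h2
    · intro h
      rw [(CharP.cast_eq_zero_iff Z p m).mpr h, gs_zero]
  · intro h
    have h2 := congrArg (coeff 2) h
    simp [coeff_X] at h2
end

section
/- Let K be a field of characteristic p > 0 and let n be a positive integer with n not divisible by p. Then for every g ∈ J(K) there exists a unique ω ∈ J(K) such that ω^[n] = g. -/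
open PowerSeries Finset

section Aux
variable {K : Type*} [Field K]

lemma coeff_pow_of_lt (τ : K⟦X⟧) (h0 : coeff 0 τ = 0) :
    ∀ j l, l < j → coeff l (τ ^ j) = 0 := by
  intro j
  induction j with
  | zero => intro l hl; omega
  | succ j ih =>
    intro l hl
    rw [pow_succ, mul_comm, PowerSeries.coeff_mul]
    apply Finset.sum_eq_zero
    rintro ⟨i, i'⟩ hmem
    rw [Finset.HasAntidiagonal.mem_antidiagonal] at hmem
    rcases Nat.eq_zero_or_pos i with h | h
    · subst h; simp [h0]
    · have : i' < j := by omega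
      simp [ih i' this]

lemma coeff_pow_agree (τ τ' : K⟦X⟧) (h0 : coeff 0 τ = 0) (h0' : coeff 0 τ' = 0)
    (M : ℕ) (h : ∀ i ≤ M, coeff i τ = coeff i τ') :
    ∀ j k, k ≤ M + j → coeff k (τ ^ (j + 1)) = coeff k (τ' ^ (j + 1)) := by
  intro j
  induction j with
  | zero => intro k hk; simpa using h k (by simpa using hk)
  | succ j ih =>
    intro k hk
    rw [pow_succ τ (j+1), pow_succ τ' (j+1), PowerSeries.coeff_mul, PowerSeries.coeff_mul]
    apply Finset.sum_congr rfl
    rintro ⟨a, b⟩ hmem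
    rw [Finset.HasAntidiagonal.mem_antidiagonal] at hmem
    rcases Nat.eq_zero_or_pos b with hb | hb
    · subst hb; simp [h0, h0']
    · rcases le_or_gt b M with hbM | hbM
      · rw [ih a (by omega), h b hbM]
      · have ha : a < j + 1 := by omega
        rw [coeff_pow_of_lt τ h0 _ _ ha, coeff_pow_of_lt τ' h0' _ _ ha, zero_mul, zero_mul]

lemma coeff_pow_diag (τ : K⟦X⟧) (h0 : coeff 0 τ = 0) :
    ∀ k, coeff k (τ ^ k) = (coeff 1 τ) ^ k := by
  intro k
  induction k with
  | zero => simp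
  | succ k ih =>
    rw [pow_succ, PowerSeries.coeff_mul]
    rw [Finset.sum_eq_single (k, 1)]
    · rw [ih, pow_succ]
    · rintro ⟨a, b⟩ hmem hne
      rw [Finset.HasAntidiagonal.mem_antidiagonal] at hmem
      rcases Nat.eq_zero_or_pos b with hb | hb
      · subst hb; simp [h0]
      · have : a < k := by
          rcases Nat.lt_or_ge a k with h' | h'
          · exact h'
          · exfalso; apply hne
            have : a = k := by omega
            subst this
            simp at hmem ⊢; omega
        simp [coeff_pow_of_lt τ h0 k a this]
    · intro hnm
      exfalso; apply hnm
      rw [Finset.HasAntidiagonal.mem_antidiagonal]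

lemma psComp_coeff_zero (f g : K⟦X⟧) (hf0 : coeff 0 f = 0) :
    coeff 0 (psComp f g) = 0 := by
  simp [coeff_psComp, hf0]

lemma psComp_coeff_one (f g : K⟦X⟧) (hf1 : coeff 1 f = 1) (hg1 : coeff 1 g = 1) :
    coeff 1 (psComp f g) = 1 := by
  rw [coeff_psComp]
  rw [Finset.sum_range_succ, Finset.sum_range_succ, Finset.sum_range_zero]
  simp [hf1, hg1]

lemma psIter_coeff_zero (ω : K⟦X⟧) (h0 : coeff 0 ω = 0) (m : ℕ) :
    coeff 0 (psIter ω m) = 0 := by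
  induction m with
  | zero => simp [psIter]
  | succ m ih => exact psComp_coeff_zero ω _ h0

lemma psIter_coeff_one (ω : K⟦X⟧) (h1 : coeff 1 ω = 1) (m : ℕ) :
    coeff 1 (psIter ω m) = 1 := by
  induction m with
  | zero => simp [psIter]
  | succ m ih => exact psComp_coeff_one ω _ h1 ih

lemma psComp_agree (f f' g g' : K⟦X⟧)
    (hg0 : coeff 0 g = 0) (hg0' : coeff 0 g' = 0) (M : ℕ)
    (hf : ∀ i ≤ M, coeff i f = coeff i f')
    (hg : ∀ i ≤ M, coeff i g = coeff i g') :
    ∀ m ≤ M, coeff m (psComp f g) = coeff m (psComp f' g') := by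
  intro m hm
  rw [coeff_psComp, coeff_psComp]
  apply Finset.sum_congr rfl
  intro j hj
  rw [Finset.mem_range] at hj
  rw [hf j (by omega)]
  rcases Nat.eq_zero_or_pos j with hj0 | hj0
  · subst hj0; simp
  · obtain ⟨j', rfl⟩ : ∃ j', j = j' + 1 := ⟨j - 1, by omega⟩
    rw [coeff_pow_agree g g' hg0 hg0' M hg j' m (by omega)]

/-- Key single-composition coefficient identity. -/
lemma psComp_key (f f' g g' : K⟦X⟧) (k : ℕ) (hk : 2 ≤ k)
    (hf1 : coeff 1 f = 1)
    (hg0 : coeff 0 g = 0) (hg0' : coeff 0 g' = 0) (hg1 : coeff 1 g = 1)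
    (hf : ∀ i < k, coeff i f = coeff i f')
    (hg : ∀ i < k, coeff i g = coeff i g') :
    coeff k (psComp f g) - coeff k (psComp f' g')
      = (coeff k f - coeff k f') + (coeff k g - coeff k g') := by
  have hf1' : coeff 1 f' = 1 := by rw [← hf 1 (by omega)]; exact hf1
  have hg1' : coeff 1 g' = 1 := by rw [← hg 1 (by omega)]; exact hg1
  rw [coeff_psComp, coeff_psComp, ← Finset.sum_sub_distrib]
  have hsub : ({1, k} : Finset ℕ) ⊆ Finset.range (k + 1) := by
    intro x hx
    simp only [Finset.mem_insert, Finset.mem_singleton] at hx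
    rcases hx with rfl | rfl <;> simp [Finset.mem_range] <;> omega
  rw [← Finset.sum_subset hsub ?_]
  · rw [Finset.sum_pair (by omega : (1:ℕ) ≠ k)]
    rw [hf1, hf1', coeff_pow_diag g hg0 k, coeff_pow_diag g' hg0' k, hg1, hg1']
    ring
  · intro j hjr hjne
    rw [Finset.mem_range] at hjr
    simp only [Finset.mem_insert, Finset.mem_singleton, not_or] at hjne
    rcases Nat.eq_zero_or_pos j with rfl | hj0
    · have : coeff k ((1:K⟦X⟧)) = 0 := by
        rw [PowerSeries.coeff_one]; simp; omega
      simp [this]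
    · have hj1 : 2 ≤ j := by omega
      have hjk : j < k := by omega
      obtain ⟨j', rfl⟩ : ∃ j', j = j' + 1 := ⟨j - 1, by omega⟩
      rw [hf _ hjk]
      rw [coeff_pow_agree g g' hg0 hg0' (k-1) (fun i hi => hg i (by omega)) j' k (by omega)]
      ring

end Aux

section Main
variable {K : Type*} [Field K]

/-- Key iterate lemma: if `ω, ω' ∈ J` agree below `k` (`k ≥ 2`), then the iterates agree
below `k` and the degree-`k` coefficients of the `n`-th iterates differ by `n·(ω_k - ω'_k)`. -/
lemma psIter_key (ω ω' : K⟦X⟧)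
    (h0 : coeff 0 ω = 0) (h1 : coeff 1 ω = 1)
    (h0' : coeff 0 ω' = 0) (h1' : coeff 1 ω' = 1)
    (k : ℕ) (hk : 2 ≤ k) (hagree : ∀ i < k, coeff i ω = coeff i ω') :
    ∀ n, (∀ i < k, coeff i (psIter ω n) = coeff i (psIter ω' n)) ∧
      coeff k (psIter ω n) - coeff k (psIter ω' n)
        = (n : K) * (coeff k ω - coeff k ω') := by
  intro n
  induction n with
  | zero => simp [psIter]
  | succ n ih =>
    constructor
    · intro i hi
      exact psComp_agree ω ω' (psIter ω n) (psIter ω' n)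
        (psIter_coeff_zero ω h0 n) (psIter_coeff_zero ω' h0' n) (k - 1)
        (fun i hi => hagree i (by omega)) (fun i hi => ih.1 i (by omega)) i (by omega)
    · show coeff k (psComp ω (psIter ω n)) - coeff k (psComp ω' (psIter ω' n)) = _
      rw [psComp_key ω ω' (psIter ω n) (psIter ω' n) k hk h1
        (psIter_coeff_zero ω h0 n) (psIter_coeff_zero ω' h0' n)
        (psIter_coeff_one ω h1 n) hagree ih.1, ih.2]
      push_cast
      ring

/-- Recursively defined coefficients of the iterative `n`-th root of `g`. -/
noncomputable def rootCoef (g : K⟦X⟧) (n : ℕ) : ℕ → K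
  | 0 => 0
  | 1 => 1
  | (k+2) =>
      (coeff (k+2) g -
        coeff (k+2) (psIter (PowerSeries.mk fun i =>
          if h : i < k + 2 then rootCoef g n i else 0) n)) * (n : K)⁻¹
  termination_by k => k
  decreasing_by exact h

end Main

example : True := trivial


/-- for a field `K` of characteristic `p > 0` and `n ≥ 1` not divisible by `p`,
every `g ∈ 𝒥(K)` has a unique iterative root of order `n` in `𝒥(K)`. -/
theorem unique_root_char_p_coprime {K : Type*} [Field K]
    (p : ℕ) [CharP K p] (hp : 0 < p) (n : ℕ) (hn : 1 ≤ n) (hpn : ¬ p ∣ n)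
    (g : K⟦X⟧) (hg0 : constantCoeff g = 0) (hg1 : coeff 1 g = 1) :
    ∃! ω : K⟦X⟧, (constantCoeff ω = 0 ∧ coeff 1 ω = 1) ∧ psIter ω n = g := by
  have hn0 : (n : K) ≠ 0 := fun h => hpn ((CharP.cast_eq_zero_iff K p n).mp h)
  set ω : K⟦X⟧ := PowerSeries.mk (rootCoef g n) with hωdef
  have hω0 : coeff 0 ω = 0 := by simp [hωdef, rootCoef]
  have hω1 : coeff 1 ω = 1 := by simp [hωdef, rootCoef]
  have key : ∀ k, coeff k (psIter ω n) = coeff k g := by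
    intro k
    match k with
    | 0 =>
      rw [psIter_coeff_zero ω hω0 n, PowerSeries.coeff_zero_eq_constantCoeff, hg0]
    | 1 =>
      rw [psIter_coeff_one ω hω1 n, hg1]
    | (k+2) =>
      set τ : K⟦X⟧ := PowerSeries.mk (fun i =>
        if h : i < k + 2 then rootCoef g n i else 0) with hτdef
      have hτ0 : coeff 0 τ = 0 := by
        simp [hτdef, rootCoef]
      have hτ1 : coeff 1 τ = 1 := by
        simp [hτdef, rootCoef]
      have hτk : coeff (k+2) τ = 0 := by simp [hτdef]
      have hagree : ∀ i < k + 2, coeff i ω = coeff i τ := by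
        intro i hi
        simp [hωdef, hτdef, hi]
      have hkey := (psIter_key ω τ hω0 hω1 hτ0 hτ1 (k+2) (by omega) hagree n).2
      have ha : rootCoef g n (k+2) =
          (coeff (k+2) g - coeff (k+2) (psIter τ n)) * (n : K)⁻¹ := by
        rw [rootCoef]
      have hωk : coeff (k+2) ω = rootCoef g n (k+2) := by simp [hωdef]
      rw [hωk, ha, hτk, sub_zero] at hkey
      have : coeff (k+2) (psIter ω n) =
          coeff (k+2) (psIter τ n) +
            (n : K) * ((coeff (k+2) g - coeff (k+2) (psIter τ n)) * (n : K)⁻¹) := by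
        linear_combination hkey
      rw [this]
      field_simp
      ring
  refine ⟨ω, ⟨⟨?_, hω1⟩, PowerSeries.ext key⟩, ?_⟩
  · rw [← PowerSeries.coeff_zero_eq_constantCoeff]; exact hω0
  · rintro y ⟨⟨hy0, hy1⟩, hyiter⟩
    have hy0' : coeff 0 y = 0 := by
      rw [PowerSeries.coeff_zero_eq_constantCoeff]; exact hy0
    have hiterω : psIter ω n = g := PowerSeries.ext key
    apply PowerSeries.ext
    intro i
    induction i using Nat.strong_induction_on with
    | _ i IH =>
      match i with
      | 0 => rw [hy0', hω0]
      | 1 => rw [hy1, hω1]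
      | (i+2) =>
        have hkey := (psIter_key y ω hy0' hy1 hω0 hω1 (i+2) (by omega)
          (fun j hj => IH j hj) n).2
        rw [hyiter, hiterω, sub_self] at hkey
        have := hkey.symm
        rcases mul_eq_zero.mp this.symm.symm with h | h
        · exact absurd h hn0
        · exact sub_eq_zero.mp h
end

section
/- The group J(ℤ) is not algebraically complete: for every integer n ≥ 2, the element g = x + x² of J(ℤ) has no root of order n, i.e., there is no ω ∈ J(ℤ) with ω^[n] = x + x². -/
open PowerSeries Finset

lemma psIter_coeffs (ω : ℤ⟦X⟧) (h0 : constantCoeff ω = 0) (h1 : coeff 1 ω = 1) (m : ℕ) :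
    coeff 0 (psIter ω m) = 0 ∧ coeff 1 (psIter ω m) = 1 ∧
      coeff 2 (psIter ω m) = m * coeff 2 ω := by
  have h0' : coeff 0 ω = 0 := by rwa [coeff_zero_eq_constantCoeff]
  induction m with
  | zero => simp [psIter, coeff_X]
  | succ m ih =>
    obtain ⟨g0, g1, g2⟩ := ih
    set g := psIter ω m with hg
    have hsq : coeff 2 (g ^ 2) = 1 := by
      rw [pow_two, coeff_mul, Finset.Nat.sum_antidiagonal_eq_sum_range_succ_mk]
      simp [Finset.sum_range_succ, g0, g1]
    refine ⟨?_, ?_, ?_⟩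
    · show coeff 0 (psComp ω g) = 0
      simp [psComp, h0']
    · show coeff 1 (psComp ω g) = 1
      simp [psComp, Finset.sum_range_succ, h0', h1, g1]
    · show coeff 2 (psComp ω g) = (m + 1 : ℕ) * coeff 2 ω
      simp only [psComp, coeff_mk]
      rw [Finset.sum_range_succ, Finset.sum_range_succ, Finset.sum_range_one]
      simp [h0', h1, g2, hsq]
      ring

/-- `𝒥(ℤ)` is not algebraically complete: for every `n ≥ 2`, the element
`g = x + x²` has no iterative root of order `n` in `𝒥(ℤ)`. -/
theorem substitution_group_int_not_complete (n : ℕ) (hn : 2 ≤ n) :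
    ¬ ∃ ω : ℤ⟦X⟧, (constantCoeff ω = 0 ∧ coeff 1 ω = 1) ∧
        psIter ω n = PowerSeries.X + PowerSeries.X ^ 2 := by
  rintro ⟨ω, ⟨h0, h1⟩, heq⟩
  obtain ⟨-, -, h2⟩ := psIter_coeffs ω h0 h1 n
  rw [heq] at h2
  have : (1 : ℤ) = n * coeff 2 ω := by
    simpa [coeff_X_pow, coeff_X] using h2
  have hdvd : (n : ℤ) ∣ 1 := ⟨_, this⟩
  have := Int.le_of_dvd one_pos hdvd
  omega
end

section
/- Let g = x + g₂x² + g₃x³ + g₄x⁴ + ⋯ ∈ J(ℤ). Then there exists ω ∈ J(ℤ) such that the coefficients of x², x³ and x⁴ of ω ∘ ω agree with those of g (equivalently, R₄(1,g) admits a square root in L′₄(ℤ)) if and only if 2 ∣ g₂, 4 ∣ (2g₃ − g₂²) and 16 ∣ (8g₄ − 10g₂g₃ + 4g₂³). Moreover, any such ω satisfies 2ω₂ = g₂, 4ω₃ = 2g₃ − g₂², and 16ω₄ = 8g₄ − 10g₂g₃ + 4g₂³; in particular, if g admits an iterative square root in J(ℤ) then these three divisibility conditions hold. -/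
open PowerSeries Finset

private lemma key_comp (ω : ℤ⟦X⟧) (h0 : constantCoeff ω = 0) (h1 : coeff 1 ω = 1) :
    coeff 2 (psComp ω ω) = 2 * coeff 2 ω ∧
    coeff 3 (psComp ω ω) = 2 * coeff 3 ω + 2 * (coeff 2 ω) ^ 2 ∧
    coeff 4 (psComp ω ω) = 2 * coeff 4 ω + 5 * coeff 2 ω * coeff 3 ω + (coeff 2 ω) ^ 3 := by
  have h0' : coeff 0 ω = 0 := by simpa using h0
  refine ⟨?_, ?_, ?_⟩ <;>
  · simp [psComp, Finset.sum_range_succ, coeff_mul,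
      Finset.Nat.sum_antidiagonal_eq_sum_range_succ_mk, pow_succ, h0', h1]
    ring


/-- for `g ∈ 𝒥(ℤ)`, the truncation `R₄(1,g)` admits a square root in `ℒ′₄(ℤ)`
iff `2 ∣ g₂`, `4 ∣ (2g₃ − g₂²)` and `16 ∣ (8g₄ − 10g₂g₃ + 4g₂³)`; moreover any square root
satisfies `2ω₂ = g₂`, `4ω₃ = 2g₃ − g₂²` and `16ω₄ = 8g₄ − 10g₂g₃ + 4g₂³`. In particular
these divisibility conditions are necessary for `g` to have an iterative square root. -/
theorem square_root_truncation_four (g : ℤ⟦X⟧)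
    (hg0 : constantCoeff g = 0) (hg1 : coeff 1 g = 1) :
    ((∃ ω : ℤ⟦X⟧, (constantCoeff ω = 0 ∧ coeff 1 ω = 1) ∧
        ∀ i : ℕ, 2 ≤ i → i ≤ 4 → coeff i (psComp ω ω) = coeff i g) ↔
      (2 ∣ coeff 2 g ∧ 4 ∣ (2 * coeff 3 g - (coeff 2 g) ^ 2) ∧
        16 ∣ (8 * coeff 4 g - 10 * coeff 2 g * coeff 3 g + 4 * (coeff 2 g) ^ 3))) ∧
    (∀ ω : ℤ⟦X⟧, constantCoeff ω = 0 → coeff 1 ω = 1 →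
      (∀ i : ℕ, 2 ≤ i → i ≤ 4 → coeff i (psComp ω ω) = coeff i g) →
      (2 * coeff 2 ω = coeff 2 g ∧
        4 * coeff 3 ω = 2 * coeff 3 g - (coeff 2 g) ^ 2 ∧
        16 * coeff 4 ω =
          8 * coeff 4 g - 10 * coeff 2 g * coeff 3 g + 4 * (coeff 2 g) ^ 3)) := by
  have main : ∀ ω : ℤ⟦X⟧, constantCoeff ω = 0 → coeff 1 ω = 1 →
      (∀ i : ℕ, 2 ≤ i → i ≤ 4 → coeff i (psComp ω ω) = coeff i g) →
      (2 * coeff 2 ω = coeff 2 g ∧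
        4 * coeff 3 ω = 2 * coeff 3 g - (coeff 2 g) ^ 2 ∧
        16 * coeff 4 ω =
          8 * coeff 4 g - 10 * coeff 2 g * coeff 3 g + 4 * (coeff 2 g) ^ 3) := by
    intro ω h0 h1 hω
    obtain ⟨k2, k3, k4⟩ := key_comp ω h0 h1
    have e2 := hω 2 (by norm_num) (by norm_num)
    have e3 := hω 3 (by norm_num) (by norm_num)
    have e4 := hω 4 (by norm_num) (by norm_num)
    rw [k2] at e2; rw [k3] at e3; rw [k4] at e4
    refine ⟨e2, ?_, ?_⟩
    · linear_combination 2 * e3 - (coeff 2 g + 2 * coeff 2 ω) * e2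
    · linear_combination 8 * e4 - 10 * coeff 2 g * e3 +
        (-20 * coeff 3 ω + 4 * (coeff 2 g) ^ 2 + 8 * coeff 2 g * coeff 2 ω -
          4 * (coeff 2 ω) ^ 2) * e2
  constructor
  · constructor
    · rintro ⟨ω, ⟨h0, h1⟩, hω⟩
      obtain ⟨m2, m3, m4⟩ := main ω h0 h1 hω
      exact ⟨⟨coeff 2 ω, m2.symm⟩, ⟨coeff 3 ω, m3.symm⟩, ⟨coeff 4 ω, m4.symm⟩⟩
    · rintro ⟨⟨a, ha⟩, ⟨b, hb⟩, ⟨c, hc⟩⟩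
      set ω : ℤ⟦X⟧ := PowerSeries.mk (fun n =>
        if n = 1 then 1 else if n = 2 then a else if n = 3 then b else if n = 4 then c else 0)
        with hωdef
      have h0 : constantCoeff ω = 0 := by simp [hωdef]
      have h1 : coeff 1 ω = 1 := by simp [hωdef]
      have h2 : coeff 2 ω = a := by simp [hωdef]
      have h3 : coeff 3 ω = b := by simp [hωdef]
      have h4 : coeff 4 ω = c := by simp [hωdef]
      obtain ⟨k2, k3, k4⟩ := key_comp ω h0 h1
      rw [h2] at k2 k3 k4; rw [h3] at k3 k4; rw [h4] at k4
      refine ⟨ω, ⟨h0, h1⟩, ?_⟩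
      intro i hi2 hi4
      interval_cases i
      · rw [k2]; omega
      · rw [k3]; rw [ha] at hb; linarith [hb]
      · rw [k4]; rw [ha] at hb hc
        have hG3 : coeff 3 g = 2 * b + 2 * a ^ 2 := by linarith [hb]
        rw [hG3] at hc
        linarith [hc]
  · exact main
end

section
/- Let g = x + g₂x² + g₃x³ + ⋯ ∈ J(ℤ) be such that 4 ∣ g_k for every k ≥ 2. Then g admits an iterative square root: there exists ω ∈ J(ℤ) with ω ∘ ω = g (and moreover one may take all coefficients ω_k, k ≥ 2, even). -/
open PowerSeries Finset

-- Lemma A: coefficients below the order of f^j vanish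
lemma coeffA (f : ℤ⟦X⟧) (h0 : constantCoeff f = 0) :
    ∀ j n : ℕ, n < j → coeff n (f ^ j) = 0 := by
  intro j
  induction j with
  | zero => intro n hn; omega
  | succ j ih =>
    intro n hn
    rw [pow_succ, mul_comm, PowerSeries.coeff_mul]
    apply Finset.sum_eq_zero
    intro p hp
    rw [Finset.HasAntidiagonal.mem_antidiagonal] at hp
    rcases Nat.eq_zero_or_pos p.1 with h | h
    · have : p.1 = 0 := h
      rw [this, coeff_zero_eq_constantCoeff, h0, zero_mul]
    · rw [ih p.2 (by omega), mul_zero]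

-- Lemma B: coeff n (f^n) = (f_1)^n
lemma coeffB (f : ℤ⟦X⟧) (h0 : constantCoeff f = 0) :
    ∀ n : ℕ, coeff n (f ^ n) = (coeff 1 f) ^ n := by
  intro n
  induction n with
  | zero => simp
  | succ n ih =>
    rw [pow_succ, mul_comm, PowerSeries.coeff_mul]
    rw [Finset.sum_eq_single (1, n)]
    · rw [ih, pow_succ, mul_comm]
    · intro p hp hne
      rw [Finset.HasAntidiagonal.mem_antidiagonal] at hp
      rcases Nat.lt_trichotomy p.1 1 with h | h | h
      · have : p.1 = 0 := by omega
        rw [this, coeff_zero_eq_constantCoeff, h0, zero_mul]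
      · exfalso; apply hne; have : p.2 = n := by omega
        exact Prod.ext h this
      · rw [coeffA f h0 n p.2 (by omega), mul_zero]
    · intro h; exact absurd (Finset.HasAntidiagonal.mem_antidiagonal.mpr (by omega)) h

-- Lemma C: if f, f' agree below N, then so do all powers, below N
lemma coeffC (f f' : ℤ⟦X⟧) (N : ℕ) (hag : ∀ m, m < N → coeff m f = coeff m f') :
    ∀ j : ℕ, ∀ m, m < N → coeff m (f ^ j) = coeff m (f' ^ j) := by
  intro j
  induction j with
  | zero => simp
  | succ j ih =>
    intro m hm
    rw [pow_succ, pow_succ, PowerSeries.coeff_mul, PowerSeries.coeff_mul]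
    apply Finset.sum_congr rfl
    intro p hp
    rw [Finset.HasAntidiagonal.mem_antidiagonal] at hp
    rw [ih p.1 (by omega), hag p.2 (by omega)]

-- Lemma C': agreement at N for j ≥ 2, given both have zero constant coeff
lemma coeffC' (f f' : ℤ⟦X⟧) (h0 : constantCoeff f = 0) (h0' : constantCoeff f' = 0)
    (N : ℕ) (hag : ∀ m, m < N → coeff m f = coeff m f') :
    ∀ j : ℕ, 2 ≤ j → coeff N (f ^ j) = coeff N (f' ^ j) := by
  intro j hj
  obtain ⟨i, rfl⟩ : ∃ i, j = i + 2 := ⟨j - 2, by omega⟩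
  rw [show f ^ (i+2) = f * f ^ (i+1) from by ring, show f' ^ (i+2) = f' * f' ^ (i+1) from by ring,
    PowerSeries.coeff_mul, PowerSeries.coeff_mul]
  apply Finset.sum_congr rfl
  intro p hp
  rw [Finset.HasAntidiagonal.mem_antidiagonal] at hp
  rcases Nat.eq_zero_or_pos p.1 with h | h
  · rw [h, coeff_zero_eq_constantCoeff, h0, h0', zero_mul, zero_mul]
  · rcases Nat.eq_zero_or_pos p.2 with h2 | h2
    · have hc : constantCoeff (f ^ (i+1)) = 0 := by
        rw [map_pow, h0, zero_pow (by omega)]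
      have hc' : constantCoeff (f' ^ (i+1)) = 0 := by
        rw [map_pow, h0', zero_pow (by omega)]
      rw [h2, coeff_zero_eq_constantCoeff, hc, hc', mul_zero, mul_zero]
    · rw [hag p.1 (by omega), coeffC f f' N hag (i+1) p.2 (by omega)]

-- Lemma D: divisibility of power coefficients
lemma coeffD (f : ℤ⟦X⟧) (h0 : constantCoeff f = 0)
    (hev : ∀ k : ℕ, 2 ≤ k → 2 ∣ coeff k f) :
    ∀ j : ℕ, 1 ≤ j → ∀ n : ℕ, j < n → 2 ∣ coeff n (f ^ j) := by
  intro j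
  induction j with
  | zero => omega
  | succ j ih =>
    intro _ n hn
    rcases Nat.eq_zero_or_pos j with rfl | hj
    · rw [pow_one]; exact hev n (by omega)
    · rw [pow_succ, mul_comm, PowerSeries.coeff_mul]
      apply Finset.dvd_sum
      intro p hp
      rw [Finset.HasAntidiagonal.mem_antidiagonal] at hp
      rcases Nat.lt_or_ge p.1 2 with h | h
      · rcases (show p.1 = 0 ∨ p.1 = 1 by omega) with h1 | h1
        · rw [h1, coeff_zero_eq_constantCoeff, h0, zero_mul]; exact dvd_zero 2
        · exact Dvd.dvd.mul_left (ih hj p.2 (by omega)) _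
      · exact Dvd.dvd.mul_right (hev p.1 h) _

/-- The coefficients of the iterative square root, defined recursively. -/
noncomputable def wfun (g : ℤ⟦X⟧) : ℕ → ℤ
  | 0 => 0
  | 1 => 1
  | n + 2 =>
    (coeff (n+2) g -
      ∑ j ∈ (Finset.Icc 2 (n+1)).attach,
        wfun g j.1 *
          coeff (n+2) ((PowerSeries.mk fun k => if _ : k ≤ n + 1 then wfun g k else 0) ^ j.1)) / 2
termination_by n => n
decreasing_by
  · have := Finset.mem_Icc.mp j.2; omega
  · omega

lemma wfun_zero (g : ℤ⟦X⟧) : wfun g 0 = 0 := by rw [wfun]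
lemma wfun_one (g : ℤ⟦X⟧) : wfun g 1 = 1 := by rw [wfun]

/-- truncation agrees with the full series below n+2 -/
lemma trunc_agree (g : ℤ⟦X⟧) (n : ℕ) :
    ∀ m, m < n + 2 → coeff m (PowerSeries.mk fun k => if _ : k ≤ n + 1 then wfun g k else 0)
      = coeff m (PowerSeries.mk (wfun g)) := by
  intro m hm
  rw [PowerSeries.coeff_mk, PowerSeries.coeff_mk, dif_pos (by omega)]

lemma trunc_const (g : ℤ⟦X⟧) (n : ℕ) :
    constantCoeff (PowerSeries.mk fun k => if _ : k ≤ n + 1 then wfun g k else 0) = 0 := by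
  rw [← coeff_zero_eq_constantCoeff, PowerSeries.coeff_mk, dif_pos (by omega), wfun_zero]

lemma omega_const (g : ℤ⟦X⟧) : constantCoeff (PowerSeries.mk (wfun g)) = 0 := by
  rw [← coeff_zero_eq_constantCoeff, PowerSeries.coeff_mk, wfun_zero]

/-- all higher coefficients are even -/
lemma wfun_even (g : ℤ⟦X⟧) (hdiv : ∀ k : ℕ, 2 ≤ k → 4 ∣ coeff k g) :
    ∀ n : ℕ, 2 ≤ n → 2 ∣ wfun g n := by
  intro n
  induction n using Nat.strong_induction_on with
  | _ n ih =>
    intro hn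
    obtain ⟨m, rfl⟩ : ∃ m, n = m + 2 := ⟨n - 2, by omega⟩
    rw [wfun]
    set T := PowerSeries.mk fun k => if _ : k ≤ m + 1 then wfun g k else 0 with hT
    have hTev : ∀ k : ℕ, 2 ≤ k → 2 ∣ coeff k T := by
      intro k hk
      rw [hT, PowerSeries.coeff_mk]
      by_cases h : k ≤ m + 1
      · rw [dif_pos h]; exact ih k (by omega) hk
      · rw [dif_neg h]; exact dvd_zero 2
    have h4 : (4 : ℤ) ∣ (coeff (m+2) g -
        ∑ j ∈ (Finset.Icc 2 (m+1)).attach, wfun g j.1 * coeff (m+2) (T ^ j.1)) := by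
      apply dvd_sub (hdiv (m+2) (by omega))
      apply Finset.dvd_sum
      intro j _
      have hj := Finset.mem_Icc.mp j.2
      have h1 : 2 ∣ wfun g j.1 := ih j.1 (by omega) hj.1
      have h2 : 2 ∣ coeff (m+2) (T ^ j.1) :=
        coeffD T (trunc_const g m) hTev j.1 (by omega) (m+2) (by omega)
      obtain ⟨a, ha⟩ := h1; obtain ⟨b, hb⟩ := h2
      exact ⟨a * b, by rw [ha, hb]; ring⟩
    obtain ⟨c, hc⟩ := h4
    rw [hc, show (4 : ℤ) * c = 2 * (2 * c) from by ring, Int.mul_ediv_cancel_left _ two_ne_zero]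
    exact ⟨c, rfl⟩

/-- the key recursion identity, in terms of the full series -/
lemma wfun_key (g : ℤ⟦X⟧) (hdiv : ∀ k : ℕ, 2 ≤ k → 4 ∣ coeff k g) (m : ℕ) :
    2 * wfun g (m + 2) = coeff (m+2) g -
      ∑ j ∈ Finset.Icc 2 (m+1), wfun g j * coeff (m+2) ((PowerSeries.mk (wfun g)) ^ j) := by
  have hrw : ∑ j ∈ (Finset.Icc 2 (m+1)).attach,
        wfun g j.1 * coeff (m+2)
          ((PowerSeries.mk fun k => if _ : k ≤ m + 1 then wfun g k else 0) ^ j.1)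
      = ∑ j ∈ Finset.Icc 2 (m+1), wfun g j * coeff (m+2) ((PowerSeries.mk (wfun g)) ^ j) := by
    rw [Finset.sum_attach (Finset.Icc 2 (m+1)) (fun j => wfun g j * coeff (m+2)
      ((PowerSeries.mk fun k => if _ : k ≤ m + 1 then wfun g k else 0) ^ j))]
    apply Finset.sum_congr rfl
    intro j hj
    rw [coeffC' _ _ (trunc_const g m) (omega_const g) (m+2) (trunc_agree g m) j
      (Finset.mem_Icc.mp hj).1]
  have hdvd : (2 : ℤ) ∣ (coeff (m+2) g -
      ∑ j ∈ Finset.Icc 2 (m+1), wfun g j * coeff (m+2) ((PowerSeries.mk (wfun g)) ^ j)) := by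
    apply dvd_sub (dvd_trans ⟨2, rfl⟩ (hdiv (m+2) (by omega)))
    apply Finset.dvd_sum
    intro j hj
    exact Dvd.dvd.mul_right (wfun_even g hdiv j (Finset.mem_Icc.mp hj).1) _
  rw [wfun, hrw, Int.mul_ediv_cancel' hdvd]

/-- if every coefficient `g_k`, `k ≥ 2`, of `g ∈ 𝒥(ℤ)` is divisible by 4,
then `g` has an iterative square root `ω ∈ 𝒥(ℤ)`, which can moreover be chosen with all
coefficients `ω_k`, `k ≥ 2`, even. -/
theorem square_root_of_divisible_by_four (g : ℤ⟦X⟧)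
    (hg0 : constantCoeff g = 0) (hg1 : coeff 1 g = 1)
    (hdiv : ∀ k : ℕ, 2 ≤ k → 4 ∣ coeff k g) :
    ∃ ω : ℤ⟦X⟧, (constantCoeff ω = 0 ∧ coeff 1 ω = 1) ∧
      psComp ω ω = g ∧ ∀ k : ℕ, 2 ≤ k → 2 ∣ coeff k ω := by
  refine ⟨PowerSeries.mk (wfun g), ⟨omega_const g, by rw [PowerSeries.coeff_mk, wfun_one]⟩, ?_, ?_⟩
  · ext n
    rw [psComp, PowerSeries.coeff_mk]
    match n with
    | 0 =>
      rw [show (0:ℕ)+1 = 1 from rfl, Finset.sum_range_one, PowerSeries.coeff_mk, wfun_zero,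
        zero_mul, coeff_zero_eq_constantCoeff, hg0]
    | 1 =>
      rw [Finset.sum_range_succ, Finset.sum_range_one]
      simp only [PowerSeries.coeff_mk, wfun_zero, wfun_one, pow_zero, pow_one, zero_mul,
        one_mul, zero_add]
      exact hg1.symm
    | (m+2) =>
      have hsplit : Finset.range (m + 2) = insert 0 (insert 1 (Finset.Icc 2 (m+1))) := by
        ext x; simp only [Finset.mem_range, Finset.mem_insert, Finset.mem_Icc]; omega
      rw [Finset.sum_range_succ, hsplit, Finset.sum_insert (by simp),
        Finset.sum_insert (by simp)]
      have t0 : coeff 0 (PowerSeries.mk (wfun g)) * coeff (m+2) ((PowerSeries.mk (wfun g)) ^ 0)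
          = 0 := by rw [PowerSeries.coeff_mk, wfun_zero, zero_mul]
      have t1 : coeff 1 (PowerSeries.mk (wfun g)) * coeff (m+2) ((PowerSeries.mk (wfun g)) ^ 1)
          = wfun g (m+2) := by
        rw [PowerSeries.coeff_mk, wfun_one, one_mul, pow_one, PowerSeries.coeff_mk]
      have tn : coeff (m+2) (PowerSeries.mk (wfun g)) *
          coeff (m+2) ((PowerSeries.mk (wfun g)) ^ (m+2)) = wfun g (m+2) := by
        rw [coeffB _ (omega_const g), PowerSeries.coeff_mk, PowerSeries.coeff_mk, wfun_one,
          one_pow, mul_one]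
      rw [t0, t1, tn, zero_add]
      have key := wfun_key g hdiv m
      have : ∑ j ∈ Finset.Icc 2 (m+1), coeff j (PowerSeries.mk (wfun g)) *
          coeff (m+2) ((PowerSeries.mk (wfun g)) ^ j)
          = ∑ j ∈ Finset.Icc 2 (m+1), wfun g j * coeff (m+2) ((PowerSeries.mk (wfun g)) ^ j) := by
        apply Finset.sum_congr rfl; intro j _; rw [PowerSeries.coeff_mk]
      rw [this]
      linarith [key]
  · intro k hk
    rw [PowerSeries.coeff_mk]
    exact wfun_even g hdiv k hk
end

section
/- Let K be an algebraically closed field of characteristic 0 and let g = g₁x + g₂x² + ⋯ ∈ A(K) (so g has constant coefficient 0 and g₁ ≠ 0), and assume g₁ is not a root of unity, i.e., g₁^m ≠ 1 for every integer m ≥ 1. Then for every integer n ≥ 1 and every c ∈ K with c^n = g₁, there exists a unique ω ∈ A(K) with linear coefficient c such that ω^[n] = g. In particular, g has a root of order n in A(K), and the map ω ↦ (linear coefficient of ω) is a bijection from the set of roots of order n of g in A(K) onto the set of n-th roots of g₁ in K. -/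
open PowerSeries Finset

namespace RootAux

section ring
variable {Z : Type*} [CommRing Z]

lemma coeff_psComp (f g : Z⟦X⟧) (k : ℕ) :
    coeff k (psComp f g) = ∑ j ∈ range (k+1), coeff j f * coeff k (g ^ j) := by
  simp [psComp]

lemma pow_congr {τ τ' : Z⟦X⟧} {N : ℕ} (h : ∀ i ≤ N, coeff i τ = coeff i τ')
    (j : ℕ) : ∀ l ≤ N, coeff l (τ ^ j) = coeff l (τ' ^ j) := by
  induction j with
  | zero => intro l _; simp
  | succ j ih =>
    intro l hl
    rw [pow_succ, pow_succ, coeff_mul, coeff_mul]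
    refine Finset.sum_congr rfl fun p hp => ?_
    rw [Finset.HasAntidiagonal.mem_antidiagonal] at hp
    rw [ih p.1 (by omega), h p.2 (by omega)]

lemma iter_congr {ω ω' : Z⟦X⟧} {N : ℕ} (h : ∀ i ≤ N, coeff i ω = coeff i ω')
    (n : ℕ) : ∀ l ≤ N, coeff l (psIter ω n) = coeff l (psIter ω' n) := by
  induction n with
  | zero => intro l _; rfl
  | succ n ih =>
    intro l hl
    show coeff l (psComp ω (psIter ω n)) = coeff l (psComp ω' (psIter ω' n))
    rw [coeff_psComp, coeff_psComp]
    refine Finset.sum_congr rfl fun j hj => ?_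
    rw [mem_range] at hj
    rw [h j (by omega), pow_congr ih j l hl]

lemma coeff_pow_zero {τ : Z⟦X⟧} (h0 : constantCoeff τ = 0) :
    ∀ (j l : ℕ), l < j → coeff l (τ ^ j) = 0 := by
  intro j
  induction j with
  | zero => intro l hl; omega
  | succ j ih =>
    intro l hl
    rw [pow_succ, coeff_mul]
    refine Finset.sum_eq_zero fun p hp => ?_
    rw [Finset.HasAntidiagonal.mem_antidiagonal] at hp
    by_cases h2 : p.2 = 0
    · have : coeff p.2 τ = 0 := by
        rw [h2, coeff_zero_eq_constantCoeff, h0]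
      rw [this, mul_zero]
    · rw [ih p.1 (by omega), zero_mul]

lemma coeff_pow_self {τ : Z⟦X⟧} (h0 : constantCoeff τ = 0) (k : ℕ) :
    coeff k (τ ^ k) = (coeff 1 τ) ^ k := by
  induction k with
  | zero => simp
  | succ k ih =>
    rw [pow_succ, coeff_mul]
    rw [Finset.sum_eq_single (k, 1)]
    · rw [ih, pow_succ]
    · intro p hp hne
      rw [Finset.HasAntidiagonal.mem_antidiagonal] at hp
      by_cases h2 : p.2 = 0
      · have : coeff p.2 τ = 0 := by rw [h2, coeff_zero_eq_constantCoeff, h0]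
        rw [this, mul_zero]
      · have hp1 : p.1 < k := by
          rcases Nat.lt_or_ge p.1 k with h | h
          · exact h
          · exfalso; apply hne
            have : p.2 = 1 := by omega
            have : p.1 = k := by omega
            exact Prod.ext this (by omega)
        rw [coeff_pow_zero h0 k p.1 hp1, zero_mul]
    · intro h
      exfalso; apply h; rw [Finset.HasAntidiagonal.mem_antidiagonal]

lemma pow_congr_strict {τ τ' : Z⟦X⟧} (h0 : constantCoeff τ = 0)
    (h0' : constantCoeff τ' = 0)
    {N : ℕ} (h : ∀ i ≤ N, coeff i τ = coeff i τ') {j : ℕ} (hj : 2 ≤ j) :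
    coeff (N+1) (τ ^ j) = coeff (N+1) (τ' ^ j) := by
  obtain ⟨j', rfl⟩ : ∃ j', j = j' + 1 := ⟨j - 1, by omega⟩
  rw [pow_succ, pow_succ, coeff_mul, coeff_mul]
  refine Finset.sum_congr rfl fun p hp => ?_
  rw [Finset.HasAntidiagonal.mem_antidiagonal] at hp
  by_cases h1 : p.1 = 0
  · rw [h1, coeff_pow_zero h0 j' 0 (by omega), coeff_pow_zero h0' j' 0 (by omega)]
    simp
  · by_cases h2 : p.2 = 0
    · have e1 : coeff p.2 τ = 0 := by rw [h2, coeff_zero_eq_constantCoeff, h0]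
      have e2 : coeff p.2 τ' = 0 := by rw [h2, coeff_zero_eq_constantCoeff, h0']
      rw [e1, e2, mul_zero, mul_zero]
    · rw [pow_congr h j' p.1 (by omega), h p.2 (by omega)]

lemma constantCoeff_psComp (f g : Z⟦X⟧) :
    constantCoeff (psComp f g) = constantCoeff f := by
  rw [← coeff_zero_eq_constantCoeff, coeff_psComp]
  simp

lemma constantCoeff_psIter {ω : Z⟦X⟧} (h0 : constantCoeff ω = 0) (n : ℕ) :
    constantCoeff (psIter ω n) = 0 := by
  cases n with
  | zero => exact constantCoeff_X
  | succ n => rw [show psIter ω (n+1) = psComp ω (psIter ω n) from rfl,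
      constantCoeff_psComp, h0]

lemma coeff_one_psComp (f g : Z⟦X⟧) :
    coeff 1 (psComp f g) = coeff 1 f * coeff 1 g := by
  rw [coeff_psComp]
  rw [Finset.sum_range_succ, Finset.sum_range_one]
  simp [coeff_one]

lemma coeff_one_psIter (ω : Z⟦X⟧) (n : ℕ) :
    coeff 1 (psIter ω n) = (coeff 1 ω) ^ n := by
  induction n with
  | zero => simp [psIter]
  | succ n ih =>
    rw [show psIter ω (n+1) = psComp ω (psIter ω n) from rfl, coeff_one_psComp, ih]
    ring

lemma key_diff {ω ω' : Z⟦X⟧} {c : Z}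
    (h0 : constantCoeff ω = 0) (h0' : constantCoeff ω' = 0)
    (h1 : coeff 1 ω = c) (h1' : coeff 1 ω' = c)
    {k : ℕ} (hk : 2 ≤ k) (hlow : ∀ i < k, coeff i ω = coeff i ω') :
    ∀ n, 1 ≤ n → coeff k (psIter ω n) - coeff k (psIter ω' n)
      = (∑ m ∈ range n, c ^ (m * k + (n - 1 - m))) * (coeff k ω - coeff k ω') := by
  intro n
  induction n with
  | zero => omega
  | succ n ih =>
    intro _
    have hτ0 : constantCoeff (psIter ω n) = 0 := constantCoeff_psIter h0 n
    have hτ0' : constantCoeff (psIter ω' n) = 0 := constantCoeff_psIter h0' n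
    have hτlow : ∀ i ≤ k - 1, coeff i (psIter ω n) = coeff i (psIter ω' n) :=
      fun i hi => iter_congr (fun i hi => hlow i (by omega)) n i hi
    have hτ1 : coeff 1 (psIter ω n) = c ^ n := by rw [coeff_one_psIter, h1]
    have hτ1' : coeff 1 (psIter ω' n) = c ^ n := by rw [coeff_one_psIter, h1']
    have hstep : coeff k (psIter ω (n+1)) - coeff k (psIter ω' (n+1))
        = c * (coeff k (psIter ω n) - coeff k (psIter ω' n))
          + c ^ (n * k) * (coeff k ω - coeff k ω') := by
      rw [show psIter ω (n+1) = psComp ω (psIter ω n) from rfl,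
        show psIter ω' (n+1) = psComp ω' (psIter ω' n) from rfl,
        coeff_psComp, coeff_psComp, ← Finset.sum_sub_distrib]
      have hpt : ∀ j ∈ range (k+1),
          coeff j ω * coeff k ((psIter ω n) ^ j)
            - coeff j ω' * coeff k ((psIter ω' n) ^ j)
          = (if j = 1 then c * (coeff k (psIter ω n) - coeff k (psIter ω' n)) else 0)
            + (if j = k then c ^ (n * k) * (coeff k ω - coeff k ω') else 0) := by
        intro j hj
        rw [mem_range] at hj
        rcases eq_or_ne j 1 with rfl | hj1
        · rw [if_pos rfl, if_neg (by omega), pow_one, pow_one, h1, h1']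
          ring
        · rcases eq_or_ne j k with rfl | hjk
          · rw [if_neg hj1, if_pos rfl]
            have e1 : coeff j ((psIter ω n) ^ j) = c ^ (n * j) := by
              rw [coeff_pow_self hτ0, hτ1, ← pow_mul]
            have e2 : coeff j ((psIter ω' n) ^ j) = c ^ (n * j) := by
              rw [coeff_pow_self hτ0', hτ1', ← pow_mul]
            rw [e1, e2]; ring
          · rw [if_neg hj1, if_neg hjk]
            rcases eq_or_ne j 0 with rfl | hj0
            · have e1 : coeff 0 ω = 0 := by rw [coeff_zero_eq_constantCoeff, h0]
              have e2 : coeff 0 ω' = 0 := by rw [coeff_zero_eq_constantCoeff, h0']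
              rw [e1, e2]; ring
            · have hj2 : 2 ≤ j := by omega
              have hkk : k = (k - 1) + 1 := by omega
              have e : coeff k ((psIter ω n) ^ j) = coeff k ((psIter ω' n) ^ j) := by
                rw [hkk]
                exact pow_congr_strict hτ0 hτ0' hτlow hj2
              rw [e, hlow j (by omega)]; ring
      rw [Finset.sum_congr rfl hpt, Finset.sum_add_distrib,
        Finset.sum_ite_eq' (range (k+1)) 1, Finset.sum_ite_eq' (range (k+1)) k,
        if_pos (by rw [mem_range]; omega), if_pos (by rw [mem_range]; omega)]
    rcases eq_or_ne n 0 with rfl | hn0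
    · rw [hstep]
      simp [psIter, coeff_zero_eq_constantCoeff]
    · rw [hstep, ih (by omega)]
      have : c * ((∑ m ∈ range n, c ^ (m * k + (n - 1 - m)))
            * (coeff k ω - coeff k ω'))
          + c ^ (n * k) * (coeff k ω - coeff k ω')
          = (c * (∑ m ∈ range n, c ^ (m * k + (n - 1 - m))) + c ^ (n * k))
            * (coeff k ω - coeff k ω') := by ring
      rw [this]
      congr 1
      rw [Finset.sum_range_succ, Finset.mul_sum]
      congr 1
      · refine Finset.sum_congr rfl fun m hm => ?_
        rw [mem_range] at hm
        rw [← pow_succ']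
        congr 1
        omega
      · congr 1
        omega

end ring

lemma lam_ne_zero {K : Type*} [Field K] {c : K} {n k : ℕ} (hn : 1 ≤ n) (hk : 2 ≤ k)
    (hc : c ≠ 0) (hru : ∀ m, 1 ≤ m → (c ^ n) ^ m ≠ 1) :
    (∑ m ∈ range n, c ^ (m * k + (n - 1 - m))) ≠ 0 := by
  have hx : ∀ m < n, m * k + (n - 1 - m) = m * (k - 1) + (n - 1) := by
    intro m hm
    have h1 : m * (k-1) + m = m * k := by
      have : k - 1 + 1 = k := by omega
      calc m * (k-1) + m = m * (k - 1 + 1) := by ring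
        _ = m * k := by rw [this]
    omega
  set x := c ^ (k - 1) with hxdef
  have hsum : (∑ m ∈ range n, c ^ (m * k + (n - 1 - m)))
      = (∑ m ∈ range n, x ^ m) * c ^ (n - 1) := by
    rw [Finset.sum_mul]
    refine Finset.sum_congr rfl fun m hm => ?_
    rw [mem_range] at hm
    rw [hxdef, ← pow_mul, ← pow_add]
    congr 1
    rw [Nat.mul_comm (k - 1) m]
    exact hx m hm
  rw [hsum]
  refine mul_ne_zero ?_ (pow_ne_zero _ hc)
  intro h
  have hxn : x ^ n = (c ^ n) ^ (k - 1) := by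
    rw [hxdef, ← pow_mul, ← pow_mul, mul_comm]
  have h1 : x ^ n - 1 ≠ 0 := by
    rw [hxn]
    intro h'
    exact hru (k - 1) (by omega) (by linear_combination h')
  have hg := geom_sum_mul x n
  rw [h, zero_mul] at hg
  exact h1 hg.symm

noncomputable def Wfun {K : Type*} [Field K] (g : K⟦X⟧) (n : ℕ) (c : K)
    (lam : ℕ → K) (k : ℕ) : K :=
  if k = 0 then 0
  else if k = 1 then c
  else (coeff k g - coeff k (psIter
      (PowerSeries.mk fun i : ℕ => if h : i < k then Wfun g n c lam i else 0) n)) / lam k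
termination_by k
decreasing_by exact h

end RootAux


/-- let `K` be an algebraically closed field of characteristic 0 and let
`g ∈ 𝒜(K)` (so `g(0) = 0`, `g₁ ≠ 0`) with `g₁` not a root of unity. Then for every `n ≥ 1`
and every `c ∈ K` with `c^n = g₁` there is a unique `ω ∈ 𝒜(K)` with linear coefficient `c`
and `ω^[n] = g`; in particular `g` has roots of every order `n` in `𝒜(K)`, and taking the
linear coefficient is a bijection from the order-`n` roots of `g` onto the `n`-th roots of
`g₁` in `K`. -/
theorem roots_in_A_not_root_of_unity {K : Type*} [Field K] [IsAlgClosed K] [CharZero K]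
    (g : K⟦X⟧) (hg0 : constantCoeff g = 0) (hg1 : coeff 1 g ≠ 0)
    (hnru : ∀ m : ℕ, 1 ≤ m → (coeff 1 g) ^ m ≠ 1)
    (n : ℕ) (hn : 1 ≤ n) (c : K) (hc : c ^ n = coeff 1 g) :
    ∃! ω : K⟦X⟧, (constantCoeff ω = 0 ∧ coeff 1 ω = c) ∧ psIter ω n = g := by
  have hc0 : c ≠ 0 := by
    intro h
    exact hg1 (by rw [← hc, h, zero_pow (by omega)])
  set lam : ℕ → K := fun k => ∑ m ∈ range n, c ^ (m * k + (n - 1 - m)) with hlam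
  have hlamne : ∀ k, 2 ≤ k → lam k ≠ 0 := fun k hk =>
    RootAux.lam_ne_zero hn hk hc0 (fun m hm => by rw [hc]; exact hnru m hm)
  set W := RootAux.Wfun g n c lam with hW
  have hW0 : W 0 = 0 := by rw [hW, RootAux.Wfun]; simp
  have hW1 : W 1 = c := by rw [hW, RootAux.Wfun]; simp
  set ω : K⟦X⟧ := PowerSeries.mk W with hω
  have hωc : ∀ i, coeff i ω = W i := fun i => coeff_mk i W
  have hω0 : constantCoeff ω = 0 := by
    rw [← coeff_zero_eq_constantCoeff, hωc, hW0]
  have hω1 : coeff 1 ω = c := by rw [hωc, hW1]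
  have hmain : ∀ k, coeff k (psIter ω n) = coeff k g := by
    intro k
    match k with
    | 0 =>
      rw [coeff_zero_eq_constantCoeff, RootAux.constantCoeff_psIter hω0, hg0]
    | 1 =>
      rw [RootAux.coeff_one_psIter, hω1, hc]
    | (k + 2) =>
      set base : K⟦X⟧ :=
        PowerSeries.mk fun i : ℕ => if h : i < k + 2 then W i else 0 with hbase
      have hbc : ∀ i, coeff i base = if i < k + 2 then W i else 0 := by
        intro i
        rw [hbase, coeff_mk]
        split <;> simp_all
      have hb0 : constantCoeff base = 0 := by
        rw [← coeff_zero_eq_constantCoeff, hbc, if_pos (by omega), hW0]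
      have hb1 : coeff 1 base = c := by
        rw [hbc, if_pos (by omega), hW1]
      have hlow : ∀ i < k + 2, coeff i ω = coeff i base := by
        intro i hi
        rw [hωc, hbc, if_pos hi]
      have hkey := RootAux.key_diff hω0 hb0 hω1 hb1 (by omega) hlow n hn
      have hbk : coeff (k + 2) base = 0 := by
        rw [hbc, if_neg (by omega)]
      have hWk : W (k + 2)
          = (coeff (k + 2) g - coeff (k + 2) (psIter base n)) / lam (k + 2) := by
        rw [hW, RootAux.Wfun, if_neg (by omega), if_neg (by omega), ← hW, ← hbase]
      have hl := hlamne (k + 2) (by omega)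
      rw [hωc, hbk, hWk, sub_zero, hlam] at hkey
      rw [mul_comm, div_mul_cancel₀ _ hl] at hkey
      linear_combination hkey
  refine ⟨ω, ⟨⟨hω0, hω1⟩, PowerSeries.ext hmain⟩, ?_⟩
  rintro y ⟨⟨hy0, hy1⟩, hyiter⟩
  apply PowerSeries.ext
  intro k
  induction k using Nat.strong_induction_on with
  | _ k ih =>
    match k with
    | 0 => rw [coeff_zero_eq_constantCoeff, hy0, hω0]
    | 1 => rw [hy1, hω1]
    | (k + 2) =>
      have hkey := RootAux.key_diff hy0 hω0 hy1 hω1 (show 2 ≤ k + 2 by omega)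
        (fun i hi => ih i hi) n hn
      have e1 : coeff (k + 2) (psIter y n) = coeff (k + 2) g := by rw [hyiter]
      rw [e1, hmain (k + 2), sub_self] at hkey
      have hl := hlamne (k + 2) (by omega)
      rw [hlam] at hl
      have hd : coeff (k + 2) y - coeff (k + 2) ω = 0 := by
        rcases mul_eq_zero.mp hkey.symm with h | h
        · exact absurd h hl
        · exact h
      exact sub_eq_zero.mp hd
end
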